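/- arXiv:2406.04297 — 8 statements merged into one kernel-verified Lean document; each statement's English description precedes it below -/
import Mathlib

section
/- Let B be a complex C*-algebra, σ a *-automorphism of B, and D ⊆ B a norm-closed *-subalgebra satisfying D·σ(D) = σ(D). Then for all integers k ≤ ℓ and i ≤ j and all x ∈ D_{k,ℓ}, y ∈ D_{i,j}, the product xy lies in D_{max(k,i),max(ℓ,j)}. -/
noncomputable section

variable {B : Type*} [NonUnitalCStarAlgebra B]

noncomputable instance : Group (B ≃⋆ₐ[ℂ] B) where
  mul f g := g.trans f
  one := StarAlgEquiv.refl ℂ B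
  inv := StarAlgEquiv.symm
  mul_assoc f g h := rfl
  one_mul f := rfl
  mul_one f := rfl
  inv_mul_cancel f := by ext x; exact f.symm_apply_apply x

/-- The norm-closed linear span of `{x * y : x ∈ X, y ∈ Y}`. -/
def mulSpan (X Y : Set B) : Set B :=
  closure ↑(Submodule.span ℂ {z : B | ∃ x ∈ X, ∃ y ∈ Y, z = x * y})

/-- `D_{k,ℓ}`: sums `x_{k-1} + ⋯ + x_{ℓ-1}` with `x_j ∈ σ^j(D)`. -/
def Dfin (σ : B ≃⋆ₐ[ℂ] B) (D : Set B) (k ℓ : ℤ) : Set B :=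
  {x | ∃ f : ℤ → B, (∀ j ∈ Finset.Icc (k-1) (ℓ-1), f j ∈ ⇑(σ ^ j) '' D) ∧
      x = ∑ j ∈ Finset.Icc (k-1) (ℓ-1), f j}

/-- `D_{k,∞}`. -/
def DInfR (σ : B ≃⋆ₐ[ℂ] B) (D : Set B) (k : ℤ) : Set B :=
  closure (⋃ n : ℕ, Dfin σ D k (k + n))

/-- `D_{-∞,k}`. -/
def DInfL (σ : B ≃⋆ₐ[ℂ] B) (D : Set B) (k : ℤ) : Set B :=
  closure (⋃ n : ℕ, Dfin σ D (k - n) k)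

/-- `D_σ`. -/
def Dsig (σ : B ≃⋆ₐ[ℂ] B) (D : Set B) : Set B :=
  closure (⋃ n : ℕ, Dfin σ D (-(n:ℤ)) n)

/-- Norm-closed *-subalgebra, as a predicate on subsets. -/
def IsCStarSubset (S : Set B) : Prop :=
  IsClosed S ∧ (0:B) ∈ S ∧ (∀ x ∈ S, ∀ y ∈ S, x + y ∈ S) ∧
    (∀ (c : ℂ), ∀ x ∈ S, c • x ∈ S) ∧ (∀ x ∈ S, ∀ y ∈ S, x * y ∈ S) ∧
    (∀ x ∈ S, star x ∈ S)

/-- Harnisch–Kirchberg system. -/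
def IsHKSystem (σ : B ≃⋆ₐ[ℂ] B) (D : Set B) : Prop :=
  IsCStarSubset D ∧
  mulSpan D (⇑σ '' D) = ⇑σ '' D ∧
  D ∩ ⇑σ '' D = {0} ∧
  (∀ d ∈ D, (∀ e ∈ D, d * σ e = 0 ∧ σ e * d = 0) → d = 0)

/-- Closed two-sided ideal `I` of a C*-subalgebra `C` (both given as subsets). -/
def IsClosedIdealIn (C I : Set B) : Prop :=
  I ⊆ C ∧ IsClosed I ∧ (0:B) ∈ I ∧ (∀ x ∈ I, ∀ y ∈ I, x + y ∈ I) ∧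
    (∀ (c : ℂ), ∀ x ∈ I, c • x ∈ I) ∧ (∀ c ∈ C, ∀ j ∈ I, c * j ∈ I ∧ j * c ∈ I)

/-- Essential closed two-sided ideal. -/
def IsEssentialIdealIn (C I : Set B) : Prop :=
  IsClosedIdealIn C I ∧ ∀ x ∈ C, (∀ j ∈ I, x * j = 0 ∧ j * x = 0) → x = 0


lemma aux_zpow_apply (σ : B ≃⋆ₐ[ℂ] B) (a b : ℤ) (x : B) :
    (σ ^ (a + b)) x = (σ ^ a) ((σ ^ b) x) := by rw [zpow_add]; rfl

lemma aux_cont (σ : B ≃⋆ₐ[ℂ] B) (r : ℤ) : Continuous ⇑(σ ^ r) :=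
  (NonUnitalStarAlgHom.isometry (σ ^ r) (σ ^ r).injective).continuous

lemma aux_closed (σ : B ≃⋆ₐ[ℂ] B) (r : ℤ) {S : Set B} (hS : IsClosed S) :
    IsClosed (⇑(σ ^ r) '' S) :=
  ((NonUnitalStarAlgHom.isometry (σ ^ r) (σ ^ r).injective).isClosedEmbedding.isClosedMap) S hS

/-- Base case: `d * σ(e) ∈ σ''D`. -/
lemma aux_base (σ : B ≃⋆ₐ[ℂ] B) (D : NonUnitalStarSubalgebra ℂ B)
    (hmod : mulSpan (D : Set B) (⇑σ '' (D : Set B)) = ⇑σ '' (D : Set B))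
    {d c : B} (hd : d ∈ D) (hc : c ∈ ⇑σ '' (D : Set B)) :
    d * c ∈ ⇑σ '' (D : Set B) := by
  rw [← hmod]
  exact subset_closure (Submodule.subset_span ⟨d, hd, c, hc, rfl⟩)

/-- `d * σ^{m+1}(D) ⊆ σ^{m+1}(D)`. -/
lemma aux_absorb (σ : B ≃⋆ₐ[ℂ] B) (D : NonUnitalStarSubalgebra ℂ B)
    (hD : IsClosed (D : Set B))
    (hmod : mulSpan (D : Set B) (⇑σ '' (D : Set B)) = ⇑σ '' (D : Set B)) :
    ∀ m : ℕ, ∀ d ∈ D, ∀ c ∈ ⇑(σ ^ ((m : ℤ) + 1)) '' (D : Set B),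
      d * c ∈ ⇑(σ ^ ((m : ℤ) + 1)) '' (D : Set B) := by
  intro m
  induction m with
  | zero =>
    intro d hd c hc
    simp only [Nat.cast_zero, zero_add, zpow_one] at hc ⊢
    exact aux_base σ D hmod hd hc
  | succ m ih =>
    intro d hd c hc
    have key : ∀ b ∈ mulSpan (D : Set B) (⇑σ '' (D : Set B)),
        d * (σ ^ ((m : ℤ) + 1)) b ∈ ⇑(σ ^ ((m : ℤ) + 1 + 1)) '' (D : Set B) := by
      intro b hb
      -- the set of good b is a closed submodule containing the generators
      let W : Submodule ℂ B :=
        { carrier := {b : B | d * (σ ^ ((m : ℤ) + 1)) b ∈ ⇑(σ ^ ((m : ℤ) + 1 + 1)) '' (D : Set B)}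
          add_mem' := by
            rintro b1 b2 ⟨e1, he1, h1⟩ ⟨e2, he2, h2⟩
            exact ⟨e1 + e2, add_mem he1 he2, by
              rw [map_add, map_add, mul_add, h1, h2]⟩
          zero_mem' := ⟨0, zero_mem _, by rw [map_zero, map_zero, mul_zero]⟩
          smul_mem' := by
            rintro c b1 ⟨e1, he1, h1⟩
            exact ⟨c • e1, SMulMemClass.smul_mem c he1, by
              rw [map_smul, map_smul, mul_smul_comm, h1]⟩ }
      have hWclosed : IsClosed (W : Set B) := by
        have : (W : Set B) =
            (fun b => d * (σ ^ ((m : ℤ) + 1)) b) ⁻¹' (⇑(σ ^ ((m : ℤ) + 1 + 1)) '' (D : Set B)) :=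
          rfl
        rw [this]
        exact (aux_closed σ _ hD).preimage (continuous_const.mul (aux_cont σ _))
      have hgen : {z : B | ∃ x ∈ (D : Set B), ∃ y ∈ ⇑σ '' (D : Set B), z = x * y} ⊆ (W : Set B) := by
        rintro z ⟨x, hx, y, ⟨e', he', rfl⟩, rfl⟩
        show d * (σ ^ ((m : ℤ) + 1)) (x * σ e') ∈ ⇑(σ ^ ((m : ℤ) + 1 + 1)) '' (D : Set B)
        rw [map_mul, ← mul_assoc]
        obtain ⟨d'', hd'', hdd⟩ := ih d hd ((σ ^ ((m : ℤ) + 1)) x) ⟨x, hx, rfl⟩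
        rw [← hdd]
        obtain ⟨e'', he'', hee⟩ := aux_base σ D hmod hd'' ⟨e', he', rfl⟩
        refine ⟨e'', he'', ?_⟩
        rw [aux_zpow_apply σ ((m : ℤ) + 1) 1 e'', zpow_one, hee, map_mul]
      have : mulSpan (D : Set B) (⇑σ '' (D : Set B)) ⊆ (W : Set B) :=
        closure_minimal ((Submodule.span_le).2 hgen) hWclosed
      exact this hb
    obtain ⟨e, he, rfl⟩ := hc
    have h1 : ((m : ℤ) + 1 + 1) = ((m : ℤ) + 1) + 1 := rfl
    have h2 : (σ ^ ((m : ℤ) + 1 + 1)) e = (σ ^ ((m : ℤ) + 1)) (σ e) := by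
      rw [aux_zpow_apply σ ((m : ℤ) + 1) 1, zpow_one]
    have : (↑(m + 1) : ℤ) + 1 = (m : ℤ) + 1 + 1 := by push_cast; ring
    rw [this] at *
    rw [h2]
    exact key (σ e) (by rw [hmod]; exact ⟨e, he, rfl⟩)

/-- `σ^p(D) · σ^q(D) ⊆ σ^{max p q}(D)`. -/
lemma aux_mul (σ : B ≃⋆ₐ[ℂ] B) (D : NonUnitalStarSubalgebra ℂ B)
    (hD : IsClosed (D : Set B))
    (hmod : mulSpan (D : Set B) (⇑σ '' (D : Set B)) = ⇑σ '' (D : Set B)) :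
    ∀ p q : ℤ, ∀ a ∈ ⇑(σ ^ p) '' (D : Set B), ∀ b ∈ ⇑(σ ^ q) '' (D : Set B),
      a * b ∈ ⇑(σ ^ (max p q)) '' (D : Set B) := by
  have hle : ∀ p q : ℤ, p ≤ q → ∀ a ∈ ⇑(σ ^ p) '' (D : Set B), ∀ b ∈ ⇑(σ ^ q) '' (D : Set B),
      a * b ∈ ⇑(σ ^ q) '' (D : Set B) := by
    rintro p q hpq _ ⟨d, hd, rfl⟩ _ ⟨e, he, rfl⟩
    rcases eq_or_lt_of_le hpq with h | h
    · subst h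
      exact ⟨d * e, mul_mem hd he, map_mul _ _ _⟩
    · set m : ℕ := (q - p - 1).toNat with hm
      have hq : q = p + ((m : ℤ) + 1) := by simp [hm]; omega
      have hb : (σ ^ q) e = (σ ^ p) ((σ ^ ((m : ℤ) + 1)) e) := by
        rw [hq, aux_zpow_apply]
      obtain ⟨f, hf, hff⟩ := aux_absorb σ D hD hmod m d hd ((σ ^ ((m : ℤ) + 1)) e) ⟨e, he, rfl⟩
      refine ⟨f, hf, ?_⟩
      rw [hq, aux_zpow_apply σ p ((m : ℤ) + 1) f, aux_zpow_apply σ p ((m : ℤ) + 1) e, hff,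
        map_mul]
  intro p q a ha b hb
  rcases le_total p q with h | h
  · rw [max_eq_right h]; exact hle p q h a ha b hb
  · rw [max_eq_left h]
    have hsa : star a ∈ ⇑(σ ^ p) '' (D : Set B) := by
      obtain ⟨d, hd, rfl⟩ := ha
      exact ⟨star d, star_mem hd, map_star _ _⟩
    have hsb : star b ∈ ⇑(σ ^ q) '' (D : Set B) := by
      obtain ⟨e, he, rfl⟩ := hb
      exact ⟨star e, star_mem he, map_star _ _⟩
    obtain ⟨f, hf, hff⟩ := hle q p h (star b) hsb (star a) hsa
    refine ⟨star f, star_mem hf, ?_⟩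
    rw [map_star, hff, star_mul, star_star, star_star]

/-- if `D·σ(D) = σ(D)` then `D_{k,ℓ} · D_{i,j} ⊆ D_{max(k,i),max(ℓ,j)}`
elementwise. -/
theorem stmt_2 (σ : B ≃⋆ₐ[ℂ] B) (D : NonUnitalStarSubalgebra ℂ B)
    (hD : IsClosed (D : Set B))
    (hmod : mulSpan (D : Set B) (⇑σ '' (D : Set B)) = ⇑σ '' (D : Set B))
    (k ℓ i j : ℤ) (hkℓ : k ≤ ℓ) (hij : i ≤ j) (x y : B)
    (hx : x ∈ Dfin σ (D : Set B) k ℓ) (hy : y ∈ Dfin σ (D : Set B) i j) :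
    x * y ∈ Dfin σ (D : Set B) (max k i) (max ℓ j) := by
  obtain ⟨f, hf, rfl⟩ := hx
  obtain ⟨g, hg, rfl⟩ := hy
  set s := (Finset.Icc (k-1) (ℓ-1)) ×ˢ (Finset.Icc (i-1) (j-1)) with hs
  refine ⟨fun r => ∑ pq ∈ s.filter (fun pq => max pq.1 pq.2 = r), f pq.1 * g pq.2, ?_, ?_⟩
  · intro r hr
    refine Finset.sum_induction _ (· ∈ ⇑(σ ^ r) '' (D : Set B)) ?_ ?_ ?_
    · rintro a b ⟨e1, he1, h1⟩ ⟨e2, he2, h2⟩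
      exact ⟨e1 + e2, add_mem he1 he2, by rw [map_add, h1, h2]⟩
    · exact ⟨0, zero_mem _, map_zero _⟩
    · rintro ⟨p, q⟩ hpq
      rw [Finset.mem_filter, hs, Finset.mem_product] at hpq
      obtain ⟨⟨hp, hq⟩, hmax⟩ := hpq
      rw [← hmax]
      exact aux_mul σ D hD hmod p q _ (hf p hp) _ (hg q hq)
  · rw [Finset.sum_mul_sum, ← Finset.sum_product']
    refine (Finset.sum_fiberwise_of_maps_to ?_ _).symm
    rintro ⟨p, q⟩ hpq
    rw [Finset.mem_product, Finset.mem_Icc, Finset.mem_Icc] at hpq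
    simp only [Finset.mem_Icc, sup_le_iff, le_sup_iff]
    omega

end
end

section
/- Let B be a complex C*-algebra, σ a *-automorphism of B, and D ⊆ B a norm-closed *-subalgebra satisfying D·σ(D) = σ(D). Then D_σ is the smallest σ-invariant norm-closed *-subalgebra of B containing D; that is: D_σ is a norm-closed *-subalgebra with σ(D_σ) = D_σ and D ⊆ D_σ, and every norm-closed *-subalgebra E ⊆ B with σ(E) = E and D ⊆ E satisfies D_σ ⊆ E. -/
noncomputable section

variable {B : Type*} [NonUnitalCStarAlgebra B]

namespace HKaux

variable (σ : B ≃⋆ₐ[ℂ] B) (D : NonUnitalStarSubalgebra ℂ B)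

/-- `σ^j(D)` -/
def Dj (j : ℤ) : Set B := ⇑(σ ^ j) '' (D : Set B)

lemma zpow_apply_add (i k : ℤ) (x : B) : (σ ^ (i + k)) x = (σ ^ i) ((σ ^ k) x) := by
  rw [zpow_add]; rfl

lemma cont_zpow (j : ℤ) : Continuous ⇑(σ ^ j) := (StarAlgEquiv.isometry (σ ^ j)).continuous

lemma mem_Dj_iff (j : ℤ) (x : B) : x ∈ Dj σ D j ↔ (σ ^ (-j)) x ∈ (D : Set B) := by
  constructor
  · rintro ⟨d, hd, rfl⟩
    have : (σ ^ (-j)) ((σ ^ j) d) = ((σ ^ ((-j) + j)) d) := (zpow_apply_add σ (-j) j d).symm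
    rw [this]; simpa using hd
  · intro h
    refine ⟨(σ ^ (-j)) x, h, ?_⟩
    have : (σ ^ j) ((σ ^ (-j)) x) = (σ ^ (j + (-j))) x := (zpow_apply_add σ j (-j) x).symm
    rw [this]
    show (σ ^ (j + -j)) x = x
    rw [add_neg_cancel]; rfl

lemma isClosed_Dj (hD : IsClosed (D : Set B)) (j : ℤ) : IsClosed (Dj σ D j) := by
  have : Dj σ D j = ⇑(σ ^ (-j)) ⁻¹' (D : Set B) := Set.ext fun x => mem_Dj_iff σ D j x
  rw [this]
  exact hD.preimage (cont_zpow σ (-j))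

lemma zero_mem_Dj (j : ℤ) : (0 : B) ∈ Dj σ D j :=
  ⟨0, D.zero_mem, map_zero _⟩

lemma add_mem_Dj {j : ℤ} {x y : B} (hx : x ∈ Dj σ D j) (hy : y ∈ Dj σ D j) :
    x + y ∈ Dj σ D j := by
  obtain ⟨d, hd, rfl⟩ := hx; obtain ⟨e, he, rfl⟩ := hy
  exact ⟨d + e, D.add_mem hd he, (map_add _ _ _)⟩

lemma smul_mem_Dj {j : ℤ} (c : ℂ) {x : B} (hx : x ∈ Dj σ D j) : c • x ∈ Dj σ D j := by
  obtain ⟨d, hd, rfl⟩ := hx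
  exact ⟨c • d, D.smul_mem c hd, (map_smul _ _ _)⟩

lemma star_mem_Dj {j : ℤ} {x : B} (hx : x ∈ Dj σ D j) : star x ∈ Dj σ D j := by
  obtain ⟨d, hd, rfl⟩ := hx
  exact ⟨star d, star_mem hd, map_star (σ ^ j) d⟩

lemma Dj_zero : Dj σ D 0 = (D : Set B) := by
  have : ⇑(σ ^ (0:ℤ)) = id := by rw [zpow_zero]; rfl
  rw [Dj, this, Set.image_id]

lemma sigma_mem_Dj {j : ℤ} {x : B} (hx : x ∈ Dj σ D j) : σ x ∈ Dj σ D (j + 1) := by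
  obtain ⟨d, hd, rfl⟩ := hx
  refine ⟨d, hd, ?_⟩
  rw [add_comm, zpow_apply_add σ 1 j d, zpow_one]

lemma sigma_symm_mem_Dj {j : ℤ} {x : B} (hx : x ∈ Dj σ D j) : σ.symm x ∈ Dj σ D (j - 1) := by
  obtain ⟨d, hd, rfl⟩ := hx
  refine ⟨d, hd, ?_⟩
  have : (σ ^ (j - 1)) d = (σ ^ ((-1) + j)) d := by ring_nf
  rw [this, zpow_apply_add σ (-1) j d, zpow_neg_one]
  rfl

variable {σ D} in
lemma prodD (hD : IsClosed (D : Set B))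
    (hmod : mulSpan (D : Set B) (⇑σ '' (D : Set B)) = ⇑σ '' (D : Set B)) :
    ∀ (k : ℕ), ∀ x ∈ (D : Set B), ∀ y ∈ Dj σ D (k : ℤ), x * y ∈ Dj σ D (k : ℤ) := by
  intro k
  induction k with
  | zero =>
    intro x hx y hy
    rw [Nat.cast_zero, Dj_zero] at hy ⊢
    exact D.mul_mem hx hy
  | succ k ih =>
    intro x hx y hy
    obtain ⟨d, hd, rfl⟩ := hy
    have hcast : ((k + 1 : ℕ) : ℤ) = (k : ℤ) + 1 := by push_cast; ring
    -- σ^(k+1) d = σ^k (σ d)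
    have hyone : (σ ^ ((k+1:ℕ) : ℤ)) d = (σ ^ (k:ℤ)) (σ d) := by
      rw [hcast, zpow_apply_add σ (k:ℤ) 1 d, zpow_one]
    have hσd : σ d ∈ mulSpan (D : Set B) (⇑σ '' (D : Set B)) := by
      rw [hmod]; exact ⟨d, hd, rfl⟩
    set P : Set B := {z | x * (σ ^ (k:ℤ)) z ∈ Dj σ D ((k:ℤ) + 1)} with hP
    have hPclosed : IsClosed P := by
      have : Continuous fun z : B => x * (σ ^ (k:ℤ)) z :=
        continuous_const.mul (cont_zpow σ (k:ℤ))
      exact IsClosed.preimage this (isClosed_Dj σ D hD ((k:ℤ) + 1))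
    have hgen : ∀ z ∈ {z : B | ∃ a ∈ (D : Set B), ∃ b ∈ ⇑σ '' (D : Set B), z = a * b},
        z ∈ P := by
      rintro z ⟨a, ha, b, ⟨e, he, rfl⟩, rfl⟩
      -- x * σ^k (a * σ e) = (x * σ^k a) * σ^(k+1)(e)
      show x * (σ ^ (k:ℤ)) (a * σ e) ∈ Dj σ D ((k:ℤ) + 1)
      have h1 : (σ ^ (k:ℤ)) (a * σ e) = (σ ^ (k:ℤ)) a * (σ ^ (k:ℤ)) (σ e) := map_mul _ _ _
      have h2 : x * (σ ^ (k:ℤ)) a ∈ Dj σ D (k:ℤ) :=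
        ih x hx _ ⟨a, ha, rfl⟩
      obtain ⟨d', hd', hd'eq⟩ := h2
      have h3 : d' * σ e ∈ ⇑σ '' (D : Set B) := by
        rw [← hmod]
        exact subset_closure (Submodule.subset_span ⟨d', hd', σ e, ⟨e, he, rfl⟩, rfl⟩)
      obtain ⟨e', he', he'eq⟩ := h3
      refine ⟨e', he', ?_⟩
      rw [zpow_apply_add σ (k:ℤ) 1 e', zpow_one, he'eq, map_mul, hd'eq, map_mul, mul_assoc]
    have hspanP : ∀ z ∈ Submodule.span ℂ
        {z : B | ∃ a ∈ (D : Set B), ∃ b ∈ ⇑σ '' (D : Set B), z = a * b}, z ∈ P := by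
      intro z hz
      induction hz using Submodule.span_induction with
      | mem z hz => exact hgen z hz
      | zero =>
        show x * (σ ^ (k:ℤ)) 0 ∈ Dj σ D ((k:ℤ) + 1)
        rw [map_zero, mul_zero]; exact zero_mem_Dj σ D _
      | add u v hu hv hpu hpv =>
        show x * (σ ^ (k:ℤ)) (u + v) ∈ Dj σ D ((k:ℤ) + 1)
        rw [map_add, mul_add]; exact add_mem_Dj σ D hpu hpv
      | smul c u hu hpu =>
        show x * (σ ^ (k:ℤ)) (c • u) ∈ Dj σ D ((k:ℤ) + 1)
        rw [map_smul, mul_smul_comm]; exact smul_mem_Dj σ D c hpu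
    have hcl : mulSpan (D : Set B) (⇑σ '' (D : Set B)) ⊆ P :=
      closure_minimal hspanP hPclosed
    have hfin : x * (σ ^ (k:ℤ)) (σ d) ∈ Dj σ D ((k:ℤ) + 1) := hcl hσd
    rw [hyone, hcast]
    exact hfin

variable {σ D} in
lemma prodLe (hD : IsClosed (D : Set B))
    (hmod : mulSpan (D : Set B) (⇑σ '' (D : Set B)) = ⇑σ '' (D : Set B))
    {i j : ℤ} (hij : i ≤ j) {x y : B} (hx : x ∈ Dj σ D i) (hy : y ∈ Dj σ D j) :
    x * y ∈ Dj σ D j := by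
  obtain ⟨d, hd, rfl⟩ := hx
  obtain ⟨e, he, rfl⟩ := hy
  have hji : j = i + (j - i) := by ring
  have hnat : ((j - i).toNat : ℤ) = j - i := Int.toNat_of_nonneg (by omega)
  have hye : (σ ^ j) e = (σ ^ i) ((σ ^ (j - i)) e) := by
    conv_lhs => rw [hji]
    exact zpow_apply_add σ i (j - i) e
  have h1 : d * (σ ^ (j - i)) e ∈ Dj σ D (j - i) := by
    have := prodD hD hmod (j - i).toNat d hd ((σ ^ (j - i)) e) (by
      rw [hnat]; exact ⟨e, he, rfl⟩)
    rwa [hnat] at this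
  obtain ⟨e', he', he'eq⟩ := h1
  refine ⟨e', he', ?_⟩
  rw [hye, ← map_mul, ← he'eq, ← zpow_apply_add σ i (j - i) e']
  have h4 : i + (j - i) = j := by ring
  rw [h4]

variable {σ D} in
lemma prodMax (hD : IsClosed (D : Set B))
    (hmod : mulSpan (D : Set B) (⇑σ '' (D : Set B)) = ⇑σ '' (D : Set B))
    {i j : ℤ} {x y : B} (hx : x ∈ Dj σ D i) (hy : y ∈ Dj σ D j) :
    x * y ∈ Dj σ D (max i j) := by
  rcases le_total i j with h | h
  · rw [max_eq_right h]; exact prodLe hD hmod h hx hy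
  · rw [max_eq_left h]
    have hsx : star x ∈ Dj σ D i := star_mem_Dj σ D hx
    have hsy : star y ∈ Dj σ D j := star_mem_Dj σ D hy
    have := prodLe hD hmod h hsy hsx
    have h2 : star (star y * star x) ∈ Dj σ D i := star_mem_Dj σ D this
    rwa [star_mul, star_star, star_star] at h2

/-- All finite "window" sums. -/
def Tset : Set B :=
  {x | ∃ a b : ℤ, ∃ f : ℤ → B, (∀ j ∈ Finset.Icc a b, f j ∈ Dj σ D j) ∧
      x = ∑ j ∈ Finset.Icc a b, f j}

lemma sum_pad {a b a' b' : ℤ} (h1 : a' ≤ a) (h2 : b ≤ b') (f : ℤ → B) :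
    ∑ j ∈ Finset.Icc a' b', (if j ∈ Finset.Icc a b then f j else 0)
      = ∑ j ∈ Finset.Icc a b, f j := by
  rw [Finset.sum_ite_mem, Finset.inter_eq_right.mpr (Finset.Icc_subset_Icc h1 h2)]

lemma Tset_eq : Tset σ D = ⋃ n : ℕ, Dfin σ D (-(n:ℤ)) n := by
  ext x
  constructor
  · rintro ⟨a, b, f, hf, rfl⟩
    set n : ℕ := (max (-a - 1) (b + 1)).toNat with hn
    have hna : -(n:ℤ) - 1 ≤ a := by
      have := Int.self_le_toNat (max (-a - 1) (b + 1))
      have := le_max_left (-a - 1) (b + 1)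
      omega
    have hnb : b ≤ (n:ℤ) - 1 := by
      have := Int.self_le_toNat (max (-a - 1) (b + 1))
      have := le_max_right (-a - 1) (b + 1)
      omega
    refine Set.mem_iUnion.mpr ⟨n, ?_⟩
    refine ⟨fun j => if j ∈ Finset.Icc a b then f j else 0, ?_, ?_⟩
    · intro j _
      by_cases hj : j ∈ Finset.Icc a b
      · simp only [if_pos hj]; exact hf j hj
      · simp only [if_neg hj]; exact zero_mem_Dj σ D j
    · exact (sum_pad hna hnb f).symm
  · intro hx
    obtain ⟨n, f, hf, rfl⟩ := Set.mem_iUnion.mp hx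
    exact ⟨-(n:ℤ) - 1, (n:ℤ) - 1, f, hf, rfl⟩

variable {σ D} in
lemma zero_mem_Tset : (0 : B) ∈ Tset σ D := by
  refine ⟨1, 0, fun _ => 0, ?_, ?_⟩
  · intro j hj; simp at hj
  · rw [Finset.Icc_eq_empty (by norm_num), Finset.sum_empty]

variable {σ D} in
lemma single_mem_Tset {m : ℤ} {z : B} (hz : z ∈ Dj σ D m) : z ∈ Tset σ D := by
  refine ⟨m, m, fun _ => z, ?_, ?_⟩
  · intro j hj
    simp only [Finset.mem_Icc] at hj
    have : j = m := le_antisymm hj.2 hj.1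
    rwa [this]
  · rw [Finset.Icc_self, Finset.sum_singleton]

variable {σ D} in
lemma add_mem_Tset {x y : B} (hx : x ∈ Tset σ D) (hy : y ∈ Tset σ D) :
    x + y ∈ Tset σ D := by
  obtain ⟨a, b, f, hf, rfl⟩ := hx
  obtain ⟨c, d, g, hg, rfl⟩ := hy
  refine ⟨min a c, max b d,
    fun j => (if j ∈ Finset.Icc a b then f j else 0) +
      (if j ∈ Finset.Icc c d then g j else 0), ?_, ?_⟩
  · intro j _
    refine add_mem_Dj σ D ?_ ?_
    · by_cases hj : j ∈ Finset.Icc a b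
      · simpa [hj] using hf j hj
      · simpa [hj] using zero_mem_Dj σ D j
    · by_cases hj : j ∈ Finset.Icc c d
      · simpa [hj] using hg j hj
      · simpa [hj] using zero_mem_Dj σ D j
  · rw [Finset.sum_add_distrib,
      sum_pad (min_le_left a c) (le_max_left b d) f,
      sum_pad (min_le_right a c) (le_max_right b d) g]

variable {σ D} in
lemma smul_mem_Tset (c : ℂ) {x : B} (hx : x ∈ Tset σ D) : c • x ∈ Tset σ D := by
  obtain ⟨a, b, f, hf, rfl⟩ := hx
  refine ⟨a, b, fun j => c • f j, fun j hj => smul_mem_Dj σ D c (hf j hj), ?_⟩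
  rw [Finset.smul_sum]

variable {σ D} in
lemma star_mem_Tset {x : B} (hx : x ∈ Tset σ D) : star x ∈ Tset σ D := by
  obtain ⟨a, b, f, hf, rfl⟩ := hx
  exact ⟨a, b, fun j => star (f j), fun j hj => star_mem_Dj σ D (hf j hj),
    star_sum _ _⟩

variable {σ D} in
lemma mul_mem_Tset (hD : IsClosed (D : Set B))
    (hmod : mulSpan (D : Set B) (⇑σ '' (D : Set B)) = ⇑σ '' (D : Set B))
    {x y : B} (hx : x ∈ Tset σ D) (hy : y ∈ Tset σ D) : x * y ∈ Tset σ D := by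
  obtain ⟨a, b, f, hf, rfl⟩ := hx
  obtain ⟨c, d, g, hg, rfl⟩ := hy
  rw [Finset.sum_mul_sum]
  refine Finset.sum_induction _ (· ∈ Tset σ D)
    (fun u v hu hv => add_mem_Tset hu hv) zero_mem_Tset ?_
  intro i hi
  refine Finset.sum_induction _ (· ∈ Tset σ D)
    (fun u v hu hv => add_mem_Tset hu hv) zero_mem_Tset ?_
  intro j hj
  exact single_mem_Tset (prodMax hD hmod (hf i hi) (hg j hj))

variable {σ D} in
lemma sigma_mem_Tset {x : B} (hx : x ∈ Tset σ D) : σ x ∈ Tset σ D := by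
  obtain ⟨a, b, f, hf, rfl⟩ := hx
  refine ⟨a + 1, b + 1, fun j => σ (f (j - 1)), ?_, ?_⟩
  · intro j hj
    simp only [Finset.mem_Icc] at hj
    have h1 : j - 1 ∈ Finset.Icc a b := Finset.mem_Icc.mpr (by omega)
    have := sigma_mem_Dj σ D (hf (j - 1) h1)
    rwa [sub_add_cancel] at this
  · rw [map_sum, ← Finset.map_add_right_Icc a b 1, Finset.sum_map]
    refine Finset.sum_congr rfl fun i _ => ?_
    show σ (f i) = σ (f (i + 1 - 1))
    norm_num

variable {σ D} in
lemma sigma_symm_mem_Tset {x : B} (hx : x ∈ Tset σ D) : σ.symm x ∈ Tset σ D := by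
  obtain ⟨a, b, f, hf, rfl⟩ := hx
  refine ⟨a - 1, b - 1, fun j => σ.symm (f (j + 1)), ?_, ?_⟩
  · intro j hj
    simp only [Finset.mem_Icc] at hj
    have h1 : j + 1 ∈ Finset.Icc a b := Finset.mem_Icc.mpr (by omega)
    have := sigma_symm_mem_Dj σ D (hf (j + 1) h1)
    rwa [add_sub_cancel_right] at this
  · rw [map_sum]
    have hIcc : Finset.Icc a b = (Finset.Icc (a - 1) (b - 1)).map (addRightEmbedding 1) := by
      rw [Finset.map_add_right_Icc]; congr 1 <;> ring
    rw [hIcc, Finset.sum_map]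
    refine Finset.sum_congr rfl fun i _ => ?_
    show σ.symm (f (i + 1)) = σ.symm (f (i + 1))
    rfl

/-- `σ` as a homeomorphism. -/
def homeo (σ : B ≃⋆ₐ[ℂ] B) : B ≃ₜ B :=
  { toEquiv := ⟨σ, σ.symm, σ.symm_apply_apply, σ.apply_symm_apply⟩,
    continuous_toFun := (StarAlgEquiv.isometry σ).continuous,
    continuous_invFun := (StarAlgEquiv.isometry σ.symm).continuous }

lemma coe_homeo (σ : B ≃⋆ₐ[ℂ] B) : ⇑(homeo σ) = ⇑σ := rfl

end HKaux

open HKaux in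
/-- if `D·σ(D) = σ(D)` then `D_σ` is the smallest σ-invariant norm-closed
*-subalgebra of `B` containing `D`. -/
theorem stmt_4 (σ : B ≃⋆ₐ[ℂ] B) (D : NonUnitalStarSubalgebra ℂ B)
    (hD : IsClosed (D : Set B))
    (hmod : mulSpan (D : Set B) (⇑σ '' (D : Set B)) = ⇑σ '' (D : Set B)) :
    IsCStarSubset (Dsig σ (D : Set B)) ∧
    ⇑σ '' Dsig σ (D : Set B) = Dsig σ (D : Set B) ∧
    (D : Set B) ⊆ Dsig σ (D : Set B) ∧
    ∀ E : Set B, IsCStarSubset E → ⇑σ '' E = E → (D : Set B) ⊆ E →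
      Dsig σ (D : Set B) ⊆ E := by
  have hT : Dsig σ (D : Set B) = closure (Tset σ D) := by
    rw [Dsig, Tset_eq]
  refine ⟨?_, ?_, ?_, ?_⟩
  · rw [hT]
    refine ⟨isClosed_closure, subset_closure zero_mem_Tset, ?_, ?_, ?_, ?_⟩
    · intro x hx y hy
      exact map_mem_closure₂ continuous_add hx hy fun a ha b hb => add_mem_Tset ha hb
    · intro c x hx
      exact map_mem_closure (continuous_const_smul c) hx fun a ha => smul_mem_Tset c ha
    · intro x hx y hy
      exact map_mem_closure₂ continuous_mul hx hy fun a ha b hb => mul_mem_Tset hD hmod ha hb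
    · intro x hx
      exact map_mem_closure continuous_star hx fun a ha => star_mem_Tset ha
  · rw [hT]
    have h1 : ⇑σ '' closure (Tset σ D) = (homeo σ) '' closure (Tset σ D) := by
      rw [coe_homeo]
    have hTT : ⇑σ '' Tset σ D = Tset σ D := by
      ext x
      constructor
      · rintro ⟨y, hy, rfl⟩; exact sigma_mem_Tset hy
      · intro hx
        exact ⟨σ.symm x, sigma_symm_mem_Tset hx, σ.apply_symm_apply x⟩
    rw [h1, (homeo σ).image_closure, coe_homeo, hTT]
  · rw [hT]
    intro d hd
    exact subset_closure (single_mem_Tset (m := 0) (by rw [Dj_zero]; exact hd))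
  · intro E hE hσE hDE
    obtain ⟨hEclosed, hE0, hEadd, hEsmul, hEmul, hEstar⟩ := hE
    have hσE' : ∀ x ∈ E, σ x ∈ E := fun x hx => hσE ▸ Set.mem_image_of_mem σ hx
    have hσE'' : ∀ x ∈ E, σ.symm x ∈ E := by
      intro x hx
      rw [← hσE] at hx
      obtain ⟨y, hy, rfl⟩ := hx
      rwa [σ.symm_apply_apply]
    have hDjE : ∀ j : ℤ, Dj σ D j ⊆ E := by
      intro j
      induction j using Int.induction_on with
      | zero => rw [Dj_zero]; exact hDE
      | succ i ih =>
        rintro x ⟨d, hd, rfl⟩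
        have h1 : (σ ^ ((i:ℤ) + 1)) d = σ ((σ ^ (i:ℤ)) d) := by
          rw [add_comm, zpow_apply_add σ 1 (i:ℤ) d, zpow_one]
        rw [h1]
        exact hσE' _ (ih ⟨d, hd, rfl⟩)
      | pred i ih =>
        rintro x ⟨d, hd, rfl⟩
        have h1 : (σ ^ (-(i:ℤ))) d = σ ((σ ^ (-(i:ℤ) - 1)) d) := by
          have h2 : -(i:ℤ) = 1 + (-(i:ℤ) - 1) := by ring
          conv_lhs => rw [h2]
          rw [zpow_apply_add σ 1 (-(i:ℤ) - 1) d, zpow_one]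
        have h3 : (σ ^ (-(i:ℤ))) d ∈ E := ih ⟨d, hd, rfl⟩
        have h4 := hσE'' _ h3
        rw [h1, σ.symm_apply_apply] at h4
        exact h4
    rw [hT]
    refine closure_minimal ?_ hEclosed
    rintro x ⟨a, b, f, hf, rfl⟩
    refine Finset.sum_induction f (· ∈ E) (fun u v hu hv => hEadd u hu v hv) hE0 ?_
    intro j hj
    exact hDjE j (hf j hj)


end
end

section
/- Let B be a complex C*-algebra, σ a *-automorphism of B, and D ⊆ B a norm-closed *-subalgebra satisfying D·σ(D) = σ(D). Then for all integers k₁ ≤ k₂ ≤ ℓ, D_{k₂,ℓ} is a closed two-sided ideal of the C*-algebra D_{k₁,ℓ}, and for every ℓ ∈ ℤ, D_{ℓ,∞} is a closed two-sided ideal of the C*-algebra D_σ. -/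
noncomputable section

variable {B : Type*} [NonUnitalCStarAlgebra B]

namespace HK5

variable (σ : B ≃⋆ₐ[ℂ] B) (D : NonUnitalStarSubalgebra ℂ B)

lemma mul_apply (f g : B ≃⋆ₐ[ℂ] B) (x : B) : (f * g) x = f (g x) := rfl

lemma zpow_apply_add (i j : ℤ) (x : B) : (σ ^ (i + j)) x = (σ ^ i) ((σ ^ j) x) := by
  rw [zpow_add]; rfl

lemma isometry_zpow (j : ℤ) : Isometry ⇑(σ ^ j) := StarAlgEquiv.isometry _

/-- `σ^j` as a homeomorphism. -/
def zpowHomeo (j : ℤ) : B ≃ₜ B where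
  toFun := ⇑(σ ^ j)
  invFun := ⇑(σ ^ (-j))
  left_inv x := by rw [← zpow_apply_add σ (-j) j, neg_add_cancel, zpow_zero]; rfl
  right_inv x := by rw [← zpow_apply_add σ j (-j), add_neg_cancel, zpow_zero]; rfl
  continuous_toFun := (isometry_zpow σ j).continuous
  continuous_invFun := (isometry_zpow σ (-j)).continuous

/-- `σ^j` as a linear map. -/
def zpowLin (j : ℤ) : B →ₗ[ℂ] B where
  toFun := ⇑(σ ^ j)
  map_add' x y := map_add _ x y
  map_smul' c x := by simpa using map_smul (σ ^ j) c x

/-- The set `σ^j(D)`. -/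
def Aset (j : ℤ) : Set B := ⇑(σ ^ j) '' (D : Set B)

variable {σ D}

lemma Aset_closed (hD : IsClosed (D : Set B)) (j : ℤ) : IsClosed (Aset σ D j) :=
  ((isometry_zpow σ j).isClosedEmbedding.isClosedMap _ hD)

lemma Aset_zero (j : ℤ) : (0:B) ∈ Aset σ D j := ⟨0, D.zero_mem, map_zero _⟩

lemma Aset_add {j : ℤ} {x y : B} (hx : x ∈ Aset σ D j) (hy : y ∈ Aset σ D j) :
    x + y ∈ Aset σ D j := by
  obtain ⟨d, hd, rfl⟩ := hx; obtain ⟨e, he, rfl⟩ := hy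
  exact ⟨d + e, D.add_mem hd he, map_add _ _ _⟩

lemma Aset_smul {j : ℤ} (c : ℂ) {x : B} (hx : x ∈ Aset σ D j) : c • x ∈ Aset σ D j := by
  obtain ⟨d, hd, rfl⟩ := hx
  exact ⟨c • d, SMulMemClass.smul_mem c hd, by simpa using map_smul (σ ^ j) c d⟩

lemma Aset_star {j : ℤ} {x : B} (hx : x ∈ Aset σ D j) : star x ∈ Aset σ D j := by
  obtain ⟨d, hd, rfl⟩ := hx
  exact ⟨star d, star_mem hd, map_star (σ ^ j) d⟩

lemma Aset_mul_self {j : ℤ} {x y : B} (hx : x ∈ Aset σ D j) (hy : y ∈ Aset σ D j) :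
    x * y ∈ Aset σ D j := by
  obtain ⟨d, hd, rfl⟩ := hx; obtain ⟨e, he, rfl⟩ := hy
  exact ⟨d * e, D.mul_mem hd he, map_mul _ _ _⟩

lemma image_prodSet (j : ℤ) (X Y : Set B) :
    ⇑(σ ^ j) '' {z : B | ∃ x ∈ X, ∃ y ∈ Y, z = x * y}
      = {z : B | ∃ x ∈ ⇑(σ ^ j) '' X, ∃ y ∈ ⇑(σ ^ j) '' Y, z = x * y} := by
  ext w
  constructor
  · rintro ⟨z, ⟨x, hx, y, hy, rfl⟩, rfl⟩
    exact ⟨_, ⟨x, hx, rfl⟩, _, ⟨y, hy, rfl⟩, map_mul _ _ _⟩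
  · rintro ⟨_, ⟨x, hx, rfl⟩, _, ⟨y, hy, rfl⟩, rfl⟩
    exact ⟨x * y, ⟨x, hx, y, hy, rfl⟩, map_mul _ _ _⟩

lemma image_mulSpan (j : ℤ) (X Y : Set B) :
    ⇑(σ ^ j) '' mulSpan X Y = mulSpan (⇑(σ ^ j) '' X) (⇑(σ ^ j) '' Y) := by
  unfold mulSpan
  rw [show ⇑(σ ^ j) = ⇑(zpowHomeo σ j) from rfl, (zpowHomeo σ j).image_closure]
  rw [show ⇑(zpowHomeo σ j) = ⇑(zpowLin σ j) from rfl]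
  rw [← Submodule.map_coe, Submodule.map_span]
  rw [show ⇑(zpowLin σ j) = ⇑(σ ^ j) from rfl, image_prodSet]

lemma Aset_succ (hmod : mulSpan (D : Set B) (⇑σ '' (D : Set B)) = ⇑σ '' (D : Set B)) (m : ℤ) :
    mulSpan (Aset σ D m) (Aset σ D (m + 1)) = Aset σ D (m + 1) := by
  have h1 : Aset σ D (m + 1) = ⇑(σ ^ m) '' (⇑σ '' (D : Set B)) := by
    rw [Aset, Set.image_image]
    apply Set.image_congr'
    intro x
    have ha := zpow_apply_add σ 1 m x
    have hb := zpow_apply_add σ m 1 x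
    rw [zpow_one] at ha hb
    exact hb
  rw [h1]
  simp only [Aset]
  rw [← image_mulSpan, hmod]
lemma Aset_mul_left (hmod : mulSpan (D : Set B) (⇑σ '' (D : Set B)) = ⇑σ '' (D : Set B)) :
    ∀ (n : ℕ) (i : ℤ) (a b : B), a ∈ Aset σ D i → b ∈ Aset σ D (i + n) →
      a * b ∈ Aset σ D (i + n) := by
  intro n
  induction n with
  | zero =>
    intro i a b ha hb
    simp only [Nat.cast_zero, add_zero] at hb ⊢
    exact Aset_mul_self ha hb
  | succ n ih =>
    intro i a b ha hb
    have hcast : (i + ((n : ℕ) + 1 : ℕ) : ℤ) = (i + n) + 1 := by push_cast; ring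
    rw [hcast] at hb ⊢
    set m : ℤ := i + (n : ℤ) with hm
    set S : Set B := {z : B | ∃ x ∈ Aset σ D m, ∃ y ∈ Aset σ D (m + 1), z = x * y} with hS
    have hb' : b ∈ closure (↑(Submodule.span ℂ S) : Set B) := by
      rw [← Aset_succ hmod m] at hb
      exact hb
    have himg : ∀ z ∈ S, a * z ∈ S := by
      rintro z ⟨x, hx, y, hy, rfl⟩
      exact ⟨a * x, ih i a x ha hx, y, hy, (mul_assoc a x y).symm⟩
    have hmap : (fun y : B => a * y) '' (↑(Submodule.span ℂ S) : Set B)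
        ⊆ (↑(Submodule.span ℂ S) : Set B) := by
      have h5 : Submodule.map (LinearMap.mulLeft ℂ a) (Submodule.span ℂ S)
          ≤ Submodule.span ℂ S := by
        rw [Submodule.map_span]
        rw [Submodule.span_le]
        rintro _ ⟨z, hz, rfl⟩
        exact Submodule.subset_span (himg z hz)
      rintro w ⟨y, hy, rfl⟩
      exact h5 ⟨y, hy, rfl⟩
    have hfin : a * b ∈ closure (↑(Submodule.span ℂ S) : Set B) := by
      have h2 := image_closure_subset_closure_image
        (f := fun y : B => a * y) (s := (↑(Submodule.span ℂ S) : Set B))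
        (continuous_mul_left a)
      have h3 : a * b ∈ (fun y : B => a * y) '' closure (↑(Submodule.span ℂ S) : Set B) :=
        ⟨b, hb', rfl⟩
      exact closure_mono hmap (h2 h3)
    rw [← Aset_succ hmod m]
    exact hfin

lemma Aset_mul (hmod : mulSpan (D : Set B) (⇑σ '' (D : Set B)) = ⇑σ '' (D : Set B))
    {i j : ℤ} {a b : B} (ha : a ∈ Aset σ D i) (hb : b ∈ Aset σ D j) :
    a * b ∈ Aset σ D (max i j) := by
  rcases le_total i j with h | h
  · rw [max_eq_right h]
    have hj : j = i + ((j - i).toNat : ℕ) := by omega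
    rw [hj] at hb ⊢
    exact Aset_mul_left hmod _ i a b ha hb
  · rw [max_eq_left h]
    have hi : i = j + ((i - j).toNat : ℕ) := by omega
    rw [hi] at ha ⊢
    have h1 : star b * star a ∈ Aset σ D (j + ((i - j).toNat : ℕ)) :=
      Aset_mul_left hmod _ j (star b) (star a) (Aset_star hb) (Aset_star ha)
    have h2 : a * b = star (star b * star a) := by simp
    rw [h2]
    exact Aset_star h1
end HK5

namespace HK5

variable {σ : B ≃⋆ₐ[ℂ] B} {D : NonUnitalStarSubalgebra ℂ B}

lemma Dfin_zero (k ℓ : ℤ) : (0:B) ∈ Dfin σ (D : Set B) k ℓ :=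
  ⟨fun _ => 0, fun j _ => Aset_zero j, by simp⟩

lemma Dfin_add {k ℓ : ℤ} {x y : B} (hx : x ∈ Dfin σ (D : Set B) k ℓ)
    (hy : y ∈ Dfin σ (D : Set B) k ℓ) : x + y ∈ Dfin σ (D : Set B) k ℓ := by
  obtain ⟨f, hf, rfl⟩ := hx
  obtain ⟨g, hg, rfl⟩ := hy
  exact ⟨fun j => f j + g j, fun j hj => Aset_add (hf j hj) (hg j hj),
    by rw [Finset.sum_add_distrib]⟩

lemma Dfin_smul {k ℓ : ℤ} (c : ℂ) {x : B} (hx : x ∈ Dfin σ (D : Set B) k ℓ) :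
    c • x ∈ Dfin σ (D : Set B) k ℓ := by
  obtain ⟨f, hf, rfl⟩ := hx
  exact ⟨fun j => c • f j, fun j hj => Aset_smul c (hf j hj), by rw [Finset.smul_sum]⟩

lemma Dfin_star {k ℓ : ℤ} {x : B} (hx : x ∈ Dfin σ (D : Set B) k ℓ) :
    star x ∈ Dfin σ (D : Set B) k ℓ := by
  obtain ⟨f, hf, rfl⟩ := hx
  exact ⟨fun j => star (f j), fun j hj => Aset_star (hf j hj), by rw [star_sum]⟩

lemma Dfin_mono {k k' ℓ ℓ' : ℤ} (hk : k ≤ k') (hl : ℓ' ≤ ℓ) :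
    Dfin σ (D : Set B) k' ℓ' ⊆ Dfin σ (D : Set B) k ℓ := by
  rintro x ⟨f, hf, rfl⟩
  refine ⟨fun j => if j ∈ Finset.Icc (k'-1) (ℓ'-1) then f j else 0, fun j hj => ?_, ?_⟩
  · dsimp only
    by_cases h : j ∈ Finset.Icc (k'-1) (ℓ'-1)
    · rw [if_pos h]; exact hf j h
    · rw [if_neg h]; exact Aset_zero j
  · rw [Finset.sum_ite_mem,
      Finset.inter_eq_right.mpr (Finset.Icc_subset_Icc (by omega) (by omega))]

lemma Dfin_single {k ℓ m : ℤ} (hm : m ∈ Finset.Icc (k-1) (ℓ-1)) {x : B}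
    (hx : x ∈ Aset σ D m) : x ∈ Dfin σ (D : Set B) k ℓ := by
  refine ⟨fun j => if j = m then x else 0, fun j hj => ?_, ?_⟩
  · dsimp only
    by_cases h : j = m
    · rw [if_pos h, h]; exact hx
    · rw [if_neg h]; exact Aset_zero j
  · rw [Finset.sum_ite_eq' (Finset.Icc (k-1) (ℓ-1)) m (fun _ => x), if_pos hm]

lemma Dfin_sum_mem {k ℓ : ℤ} {ι : Type*} (s : Finset ι) (f : ι → B)
    (h : ∀ i ∈ s, f i ∈ Dfin σ (D : Set B) k ℓ) : ∑ i ∈ s, f i ∈ Dfin σ (D : Set B) k ℓ :=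
  Finset.sum_induction f _ (fun _ _ ha hb => Dfin_add ha hb) (Dfin_zero k ℓ) h

lemma Dfin_mul (hmod : mulSpan (D : Set B) (⇑σ '' (D : Set B)) = ⇑σ '' (D : Set B))
    {k₁ ℓ₁ k₂ ℓ₂ : ℤ} {x y : B}
    (hx : x ∈ Dfin σ (D : Set B) k₁ ℓ₁) (hy : y ∈ Dfin σ (D : Set B) k₂ ℓ₂) :
    x * y ∈ Dfin σ (D : Set B) (max k₁ k₂) (max ℓ₁ ℓ₂) := by
  obtain ⟨f, hf, rfl⟩ := hx
  obtain ⟨g, hg, rfl⟩ := hy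
  rw [Finset.sum_mul_sum]
  refine Dfin_sum_mem _ _ (fun i hi => Dfin_sum_mem _ _ (fun j hj => ?_))
  have h1 := Aset_mul hmod (hf i hi) (hg j hj)
  refine Dfin_single ?_ h1
  simp only [Finset.mem_Icc] at hi hj ⊢
  omega

/-- The set of sums of elements of `X` and `Y`. -/
def sumSet (X Y : Set B) : Set B := {x : B | ∃ a ∈ X, ∃ j ∈ Y, x = a + j}

lemma Dfin_eq_Aset (k : ℤ) : Dfin σ (D : Set B) k k = Aset σ D (k-1) := by
  ext x
  constructor
  · rintro ⟨f, hf, rfl⟩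
    rw [Finset.Icc_self, Finset.sum_singleton]
    exact hf _ (by simp)
  · intro hx
    exact Dfin_single (by simp) hx

lemma Dfin_decomp {k ℓ : ℤ} (h : k < ℓ) :
    Dfin σ (D : Set B) k ℓ = sumSet (Aset σ D (k-1)) (Dfin σ (D : Set B) (k+1) ℓ) := by
  ext x
  constructor
  · rintro ⟨f, hf, rfl⟩
    refine ⟨f (k-1), hf _ (by simp only [Finset.mem_Icc]; omega),
      ∑ j ∈ Finset.Icc k (ℓ-1), f j, ?_, ?_⟩
    · refine ⟨f, fun j hj => hf j ?_, ?_⟩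
      · simp only [Finset.mem_Icc] at hj ⊢; omega
      · have : k + 1 - 1 = k := by omega
        rw [this]
    · rw [← Finset.add_sum_erase _ f
        (show (k-1) ∈ Finset.Icc (k-1) (ℓ-1) by simp only [Finset.mem_Icc]; omega)]
      congr 1
      refine Finset.sum_congr ?_ (fun _ _ => rfl)
      ext j
      simp only [Finset.mem_Icc, Finset.mem_erase]
      omega
  · rintro ⟨a, ha, jj, hj, rfl⟩
    exact Dfin_add (Dfin_single (by simp only [Finset.mem_Icc]; omega) ha)
      (Dfin_mono (by omega) le_rfl hj)

variable (σ D)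

/-- `σ^j(D)` as a non-unital star subalgebra. -/
def AsetSub (j : ℤ) : NonUnitalStarSubalgebra ℂ B where
  carrier := Aset σ D j
  add_mem' := Aset_add
  zero_mem' := Aset_zero j
  mul_mem' := Aset_mul_self
  smul_mem' c x hx := Aset_smul c hx
  star_mem' := Aset_star

/-- `D_{k,ℓ}` as a non-unital star subalgebra. -/
def DfinSub (hmod : mulSpan (D : Set B) (⇑σ '' (D : Set B)) = ⇑σ '' (D : Set B)) (k ℓ : ℤ) :
    NonUnitalStarSubalgebra ℂ B where
  carrier := Dfin σ (D : Set B) k ℓ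
  add_mem' := Dfin_add
  zero_mem' := Dfin_zero k ℓ
  mul_mem' {a b} ha hb := by simpa using Dfin_mul hmod ha hb
  smul_mem' c x hx := Dfin_smul c hx
  star_mem' := Dfin_star

section CStarCore

variable {A J : NonUnitalStarSubalgebra ℂ B}

lemma cfc_mem (hA : IsClosed (A : Set B)) {a : B} (ha : a ∈ A) (hsa : IsSelfAdjoint a)
    (g : ℝ → ℝ) (hg : Continuous g) (hg0 : g 0 = 0) : cfcₙ g a ∈ A := by
  haveI : IsClosed ((A : Set B)) := hA
  set a' : A := ⟨a, ha⟩ with ha'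
  have hsa' : IsSelfAdjoint a' := by
    rw [isSelfAdjoint_iff]
    exact Subtype.ext hsa.star_eq
  have key := NonUnitalStarAlgHomClass.map_cfcₙ (NonUnitalStarSubalgebraClass.subtype A) g a'
    hg.continuousOn hg0 continuous_subtype_val hsa' hsa
  obtain ⟨b', hb'⟩ : ∃ b' : A, (b' : B) = cfcₙ g a := ⟨cfcₙ g a', key⟩
  rw [← hb']
  exact b'.2

/-- `a^(m+1)` in a non-unital algebra. -/
def lpow (a : B) : ℕ → B
  | 0 => a
  | (m+1) => a * lpow a m

lemma cfcₙ_pow_succ {a : B} (hsa : IsSelfAdjoint a) (m : ℕ) :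
    cfcₙ (fun t : ℝ => t ^ (m+1)) a = lpow a m := by
  induction m with
  | zero => simpa [lpow] using cfcₙ_id' ℝ a
  | succ m ih =>
    have h1 : (fun t : ℝ => t ^ (m+1+1)) = fun t : ℝ => t * t ^ (m+1) := by
      funext t; ring
    rw [h1, cfcₙ_mul _ _ a (by fun_prop) (by simp) (by fun_prop) (by simp),
      cfcₙ_id' ℝ a, ih]
    rfl

lemma sa_approx (hA : IsClosed (A : Set B)) (hJ : IsClosed (J : Set B))
    (hid : ∀ a ∈ A, ∀ j ∈ J, a * j ∈ J ∧ j * a ∈ J)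
    {a : B} (ha : a ∈ A) (hsa : IsSelfAdjoint a) {δ : ℝ} {j : B} (hj : j ∈ J)
    (hja : ‖a - j‖ < δ) :
    ∃ b ∈ (A : Set B) ∩ (J : Set B), ‖a - b‖ ≤ 2 * δ := by
  have hδ : 0 < δ := lt_of_le_of_lt (norm_nonneg _) hja
  set f : ℝ → ℝ := fun t => t - max (-(2*δ)) (min t (2*δ)) with hf_def
  have hfc : Continuous f := by fun_prop
  have hf0 : f 0 = 0 := by
    simp only [hf_def]
    rw [min_eq_left (by linarith), max_eq_right (by linarith)]
    ring
  have hsmall : ∀ t : ℝ, |t| ≤ 2*δ → f t = 0 := by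
    intro t ht
    rw [abs_le] at ht
    simp only [hf_def, min_def, max_def]
    split_ifs <;> linarith
  have habs : ∀ t : ℝ, |f t| ≤ |t| := by
    intro t
    rw [abs_le]
    rcases abs_cases t with ⟨h1, h2⟩ | ⟨h1, h2⟩ <;>
      (simp only [hf_def, min_def, max_def]; split_ifs <;> constructor <;> linarith)
  have hdiff : ∀ t : ℝ, |t - f t| ≤ 2*δ := by
    intro t
    rw [abs_le]
    simp only [hf_def, min_def, max_def]
    split_ifs <;> constructor <;> linarith
  set b := cfcₙ f a with hb_def
  have hbA : b ∈ A := cfc_mem hA ha hsa f hfc hf0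
  have hab : ‖a - b‖ ≤ 2*δ := by
    have h1 : cfcₙ (fun t : ℝ => t - f t) a = cfcₙ (fun t : ℝ => t) a - cfcₙ f a :=
      cfcₙ_sub _ _ a (by fun_prop) (by simp) hfc.continuousOn hf0
    rw [cfcₙ_id' ℝ a] at h1
    rw [hb_def, ← h1]
    refine norm_cfcₙ_le fun t _ => ?_
    rw [Real.norm_eq_abs]
    exact hdiff t
  have hapow : ∀ m : ℕ, lpow a m ∈ A := by
    intro m
    induction m with
    | zero => exact ha
    | succ m ih => exact mul_mem ha ih
  have hpow : ∀ m : ℕ, ∃ jm ∈ (J : Set B), ‖lpow a m - jm‖ ≤ δ ^ (m+1) := by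
    intro m
    induction m with
    | zero => exact ⟨j, hj, by simpa [lpow] using hja.le⟩
    | succ m ih =>
      obtain ⟨jm, hjm, hnorm⟩ := ih
      have hjm' : jm ∈ J := SetLike.mem_coe.mp hjm
      refine ⟨a * jm + j * lpow a m - j * jm, ?_, ?_⟩
      · exact sub_mem (add_mem (hid a ha jm hjm').1 (hid (lpow a m) (hapow m) j hj).2)
          (mul_mem hj hjm')
      · have heq : lpow a (m+1) - (a * jm + j * lpow a m - j * jm)
            = (a - j) * (lpow a m - jm) := by
          show a * lpow a m - (a * jm + j * lpow a m - j * jm) = _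
          noncomm_ring
        rw [heq]
        calc ‖(a - j) * (lpow a m - jm)‖ ≤ ‖a - j‖ * ‖lpow a m - jm‖ := norm_mul_le _ _
          _ ≤ δ * δ ^ (m+1) :=
              mul_le_mul hja.le hnorm (norm_nonneg _) (by positivity)
          _ = δ ^ (m+1+1) := by ring
  have hbJ : b ∈ (J : Set B) := by
    rw [← hJ.closure_eq]
    rw [Metric.mem_closure_iff]
    intro ε hε
    obtain ⟨m, hm⟩ := exists_pow_lt_of_lt_one (div_pos hε hδ) (by norm_num : (2:ℝ)⁻¹ < 1)
    set g : ℝ → ℝ := fun t => f t / t ^ (m+1) with hg_def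
    have hg0 : g 0 = 0 := by simp [hg_def, hf0]
    have hgc : Continuous g := by
      rw [continuous_iff_continuousAt]
      intro t₀
      rcases eq_or_ne t₀ 0 with rfl | ht₀
      · have hev : g =ᶠ[nhds (0:ℝ)] (fun _ => (0:ℝ)) := by
          filter_upwards [Metric.ball_mem_nhds (0:ℝ) (by linarith : (0:ℝ) < 2*δ)] with t ht
          rw [Metric.mem_ball, Real.dist_eq, sub_zero] at ht
          simp [hg_def, hsmall t ht.le]
        exact (continuousAt_congr hev).mpr continuousAt_const
      · exact hfc.continuousAt.div ((continuous_pow (m+1)).continuousAt)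
          (pow_ne_zero _ ht₀)
    have hgbound : ∀ t : ℝ, |g t| ≤ ((2*δ) ^ m)⁻¹ := by
      intro t
      rcases le_or_gt (|t|) (2*δ) with h | h
      · rw [hg_def]
        simp only [hsmall t h, zero_div, abs_zero]
        positivity
      · have ht0 : (0:ℝ) < |t| := by linarith
        have h1 : |g t| = |f t| / |t| ^ (m+1) := by
          rw [hg_def]
          dsimp only
          rw [abs_div, abs_pow]
        rw [h1]
        calc |f t| / |t| ^ (m+1) ≤ |t| / |t| ^ (m+1) :=
            (div_le_div_iff_of_pos_right (by positivity)).mpr (habs t)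
          _ = (|t| ^ m)⁻¹ := by
              rw [pow_succ]
              field_simp
          _ ≤ ((2*δ) ^ m)⁻¹ :=
              inv_anti₀ (by positivity) (pow_le_pow_left₀ (by positivity) h.le m)
    have hfactor : b = lpow a m * cfcₙ g a := by
      have hfeq : f = fun t : ℝ => t ^ (m+1) * g t := by
        funext t
        rcases eq_or_ne t 0 with rfl | ht
        · simp [hf0, hg_def]
        · rw [hg_def]
          dsimp only
          field_simp
      rw [hb_def]
      conv_lhs => rw [hfeq]
      rw [cfcₙ_mul _ _ a (by fun_prop) (by simp) hgc.continuousOn hg0]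
      rw [cfcₙ_pow_succ hsa m]
    obtain ⟨jm, hjm, hjmnorm⟩ := hpow m
    have hjm' : jm ∈ J := SetLike.mem_coe.mp hjm
    refine ⟨jm * cfcₙ g a, (hid (cfcₙ g a) (cfc_mem hA ha hsa g hgc hg0) jm hjm').2, ?_⟩
    rw [dist_eq_norm]
    have h6 : b - jm * cfcₙ g a = (lpow a m - jm) * cfcₙ g a := by
      rw [hfactor]; noncomm_ring
    rw [h6]
    calc ‖(lpow a m - jm) * cfcₙ g a‖ ≤ ‖lpow a m - jm‖ * ‖cfcₙ g a‖ := norm_mul_le _ _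
      _ ≤ δ ^ (m+1) * ((2*δ) ^ m)⁻¹ :=
          mul_le_mul hjmnorm
            (norm_cfcₙ_le fun t _ => by rw [Real.norm_eq_abs]; exact hgbound t)
            (norm_nonneg _) (by positivity)
      _ = δ * (2⁻¹:ℝ) ^ m := by
          rw [mul_pow]
          field_simp
          rw [show (2:ℝ)^m * δ^m * δ * (1/2)^m = ((1/2) * 2)^m * δ^(m+1) by rw [mul_pow, pow_succ]; ring]; norm_num
      _ < ε := by
          have h7 : (2⁻¹:ℝ) ^ m * δ < ε := (lt_div_iff₀ hδ).mp hm
          linarith [h7]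
  exact ⟨b, ⟨hbA, hbJ⟩, hab⟩

lemma approx (hA : IsClosed (A : Set B)) (hJ : IsClosed (J : Set B))
    (hid : ∀ a ∈ A, ∀ j ∈ J, a * j ∈ J ∧ j * a ∈ J)
    {a : B} (ha : a ∈ A) {δ : ℝ} {j : B} (hj : j ∈ J) (hja : ‖a - j‖ < δ) :
    ∃ b ∈ (A : Set B) ∩ (J : Set B), ‖a - b‖ ≤ 4 * δ := by
  set x := ((2:ℂ))⁻¹ • (a + star a) with hx
  set z := (-(Complex.I) / 2) • (a - star a) with hz
  have hxA : x ∈ A := SMulMemClass.smul_mem _ (add_mem ha (star_mem ha))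
  have hzA : z ∈ A := SMulMemClass.smul_mem _ (sub_mem ha (star_mem ha))
  have hxsa : IsSelfAdjoint x := by
    rw [isSelfAdjoint_iff, hx, star_smul, star_add, star_star, add_comm]
    congr 1
    simp
  have hzsa : IsSelfAdjoint z := by
    rw [isSelfAdjoint_iff, hz, star_smul, star_sub, star_star]
    rw [show star (-(Complex.I)/2 : ℂ) = Complex.I/2 by simp [map_div₀]]
    rw [show star a - a = -(a - star a) from (neg_sub a (star a)).symm, smul_neg, ← neg_smul]
    congr 1
    ring
  have hI : Complex.I * (-(Complex.I)/2) = (2:ℂ)⁻¹ := by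
    rw [← mul_div_assoc, mul_neg, Complex.I_mul_I, neg_neg]
    norm_num
  have hdecomp : a = x + Complex.I • z := by
    rw [hx, hz, smul_smul, hI]
    module
  set jx := ((2:ℂ))⁻¹ • (j + star j) with hjx
  have hjxJ : jx ∈ J := SMulMemClass.smul_mem _ (add_mem hj (star_mem hj))
  have h2 : ‖((2:ℂ))⁻¹‖ = 2⁻¹ := by
    rw [norm_inv]
    norm_num
  have hxnorm : ‖x - jx‖ < δ := by
    have heq : x - jx = ((2:ℂ))⁻¹ • ((a - j) + star (a - j)) := by
      rw [hx, hjx, star_sub]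
      module
    rw [heq, norm_smul, h2]
    calc 2⁻¹ * ‖(a - j) + star (a - j)‖ ≤ 2⁻¹ * (‖a - j‖ + ‖star (a - j)‖) := by
          gcongr
          exact norm_add_le _ _
      _ = ‖a - j‖ := by rw [norm_star]; ring
      _ < δ := hja
  set jz := (-(Complex.I)/2) • (j - star j) with hjz
  have hjzJ : jz ∈ J := SMulMemClass.smul_mem _ (sub_mem hj (star_mem hj))
  have h3 : ‖(-(Complex.I)/2 : ℂ)‖ = 2⁻¹ := by
    rw [norm_div, norm_neg, Complex.norm_I]
    norm_num
  have hznorm : ‖z - jz‖ < δ := by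
    have heq : z - jz = (-(Complex.I)/2) • ((a - j) - star (a - j)) := by
      rw [hz, hjz, star_sub]
      module
    rw [heq, norm_smul, h3]
    calc 2⁻¹ * ‖(a - j) - star (a - j)‖ ≤ 2⁻¹ * (‖a - j‖ + ‖star (a - j)‖) := by
          gcongr
          exact norm_sub_le _ _
      _ = ‖a - j‖ := by rw [norm_star]; ring
      _ < δ := hja
  obtain ⟨bx, ⟨hbxA, hbxJ⟩, hbx⟩ := sa_approx hA hJ hid hxA hxsa hjxJ hxnorm
  obtain ⟨bz, ⟨hbzA, hbzJ⟩, hbz⟩ := sa_approx hA hJ hid hzA hzsa hjzJ hznorm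
  refine ⟨bx + Complex.I • bz,
    ⟨add_mem (SetLike.mem_coe.mp hbxA) (SMulMemClass.smul_mem _ (SetLike.mem_coe.mp hbzA)),
     add_mem (SetLike.mem_coe.mp hbxJ) (SMulMemClass.smul_mem _ (SetLike.mem_coe.mp hbzJ))⟩, ?_⟩
  have heq : a - (bx + Complex.I • bz) = (x - bx) + Complex.I • (z - bz) := by
    rw [hdecomp, smul_sub]
    abel
  rw [heq]
  calc ‖(x - bx) + Complex.I • (z - bz)‖ ≤ ‖x - bx‖ + ‖Complex.I • (z - bz)‖ := norm_add_le _ _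
    _ = ‖x - bx‖ + ‖z - bz‖ := by rw [norm_smul, Complex.norm_I, one_mul]
    _ ≤ 2*δ + 2*δ := add_le_add hbx hbz
    _ = 4*δ := by ring

lemma closed_sum (hA : IsClosed (A : Set B)) (hJ : IsClosed (J : Set B))
    (hid : ∀ a ∈ A, ∀ j ∈ J, a * j ∈ J ∧ j * a ∈ J) :
    IsClosed (sumSet (A : Set B) (J : Set B)) := by
  refine isClosed_of_closure_subset fun x hx => ?_
  have hchoice : ∀ n : ℕ, ∃ y ∈ sumSet (A : Set B) (J : Set B), dist x y < (2⁻¹:ℝ) ^ n :=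
    fun n => Metric.mem_closure_iff.mp hx _ (by positivity)
  choose u huS hud using hchoice
  choose α hαA β hβJ huab using huS
  have hstep : ∀ n : ℕ, ∃ c ∈ (A : Set B) ∩ (J : Set B),
      ‖(α (n+1) - α n) - c‖ ≤ 4 * (3 * (2⁻¹:ℝ) ^ n) := by
    intro n
    have hdiffeq : (α (n+1) - α n) - (-(β (n+1) - β n)) = u (n+1) - u n := by
      rw [huab (n+1), huab n]
      abel
    have hnorm : ‖(α (n+1) - α n) - (-(β (n+1) - β n))‖ < 3 * (2⁻¹:ℝ) ^ n := by
      rw [hdiffeq]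
      have htri : u (n+1) - u n = (u (n+1) - x) + (x - u n) := by abel
      have h1 : ‖u (n+1) - x‖ < (2⁻¹:ℝ)^(n+1) := by
        rw [← dist_eq_norm, dist_comm]
        exact hud (n+1)
      have h2 : ‖x - u n‖ < (2⁻¹:ℝ)^n := by
        rw [← dist_eq_norm]
        exact hud n
      have hpos : (0:ℝ) < (2⁻¹:ℝ)^n := by positivity
      calc ‖u (n+1) - u n‖ ≤ ‖u (n+1) - x‖ + ‖x - u n‖ := by
            rw [htri]; exact norm_add_le _ _
        _ < (2⁻¹:ℝ)^(n+1) + (2⁻¹:ℝ)^n := add_lt_add h1 h2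
        _ ≤ 3 * (2⁻¹:ℝ)^n := by
            rw [pow_succ]
            nlinarith
    exact approx hA hJ hid (sub_mem (SetLike.mem_coe.mp (hαA (n+1))) (SetLike.mem_coe.mp (hαA n)))
      (neg_mem (sub_mem (SetLike.mem_coe.mp (hβJ (n+1))) (SetLike.mem_coe.mp (hβJ n)))) hnorm
  choose c hcAJ hcb using hstep
  set γ : ℕ → B := fun n => α n - ∑ k ∈ Finset.range n, c k with hγ
  have hγA : ∀ n, γ n ∈ A := fun n =>
    sub_mem (SetLike.mem_coe.mp (hαA n)) (sum_mem fun k _ => SetLike.mem_coe.mp (hcAJ k).1)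
  have hcauchy : CauchySeq γ := by
    refine cauchySeq_of_dist_le_of_summable (fun n => 12 * (2⁻¹:ℝ)^n) (fun n => ?_) ?_
    · rw [dist_eq_norm]
      have heq : γ n - γ (n+1) = -((α (n+1) - α n) - c n) := by
        rw [hγ]
        dsimp only
        rw [Finset.sum_range_succ]
        abel
      rw [heq, norm_neg]
      calc ‖(α (n+1) - α n) - c n‖ ≤ 4 * (3 * (2⁻¹:ℝ)^n) := hcb n
        _ = 12 * (2⁻¹:ℝ)^n := by ring
    · exact (summable_geometric_of_lt_one (by norm_num) (by norm_num)).mul_left _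
  obtain ⟨p, hp⟩ := cauchySeq_tendsto_of_complete hcauchy
  have hpA : p ∈ (A : Set B) := hA.mem_of_tendsto hp (Filter.Eventually.of_forall hγA)
  have hβ' : ∀ n, u n - γ n ∈ (J : Set B) := by
    intro n
    have heq : u n - γ n = β n + ∑ k ∈ Finset.range n, c k := by
      rw [huab n, hγ]
      dsimp only
      abel
    rw [heq]
    exact add_mem (SetLike.mem_coe.mp (hβJ n)) (sum_mem fun k _ => SetLike.mem_coe.mp (hcAJ k).2)
  have hux : Filter.Tendsto u Filter.atTop (nhds x) := by
    rw [tendsto_iff_dist_tendsto_zero]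
    refine squeeze_zero (g := fun n => (2⁻¹:ℝ)^n) (fun n => dist_nonneg) (fun n => ?_) ?_
    · rw [dist_comm]
      exact (hud n).le
    · exact tendsto_pow_atTop_nhds_zero_of_lt_one (by norm_num) (by norm_num)
  have hlim : Filter.Tendsto (fun n => u n - γ n) Filter.atTop (nhds (x - p)) := hux.sub hp
  have hxpJ : x - p ∈ (J : Set B) := hJ.mem_of_tendsto hlim (Filter.Eventually.of_forall hβ')
  exact ⟨p, hpA, x - p, hxpJ, by abel⟩

end CStarCore

variable {σ : B ≃⋆ₐ[ℂ] B} {D : NonUnitalStarSubalgebra ℂ B}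

lemma Dfin_closed (hD : IsClosed (D : Set B))
    (hmod : mulSpan (D : Set B) (⇑σ '' (D : Set B)) = ⇑σ '' (D : Set B)) :
    ∀ (n : ℕ) (k ℓ : ℤ), ℓ = k + n → IsClosed (Dfin σ (D : Set B) k ℓ) := by
  intro n
  induction n with
  | zero =>
    intro k ℓ hk
    have hkl : ℓ = k := by omega
    subst hkl
    rw [Dfin_eq_Aset]
    exact Aset_closed hD _
  | succ n ih =>
    intro k ℓ hk
    have hlt : k < ℓ := by omega
    rw [Dfin_decomp hlt]
    have hJc : IsClosed (Dfin σ (D : Set B) (k+1) ℓ) := ih (k+1) ℓ (by omega)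
    refine closed_sum (A := AsetSub σ D (k-1)) (J := DfinSub σ D hmod (k+1) ℓ)
      (Aset_closed hD (k-1)) hJc ?_
    intro a ha jj hjj
    have haD : a ∈ Dfin σ (D : Set B) k k :=
      Dfin_single (show (k:ℤ)-1 ∈ Finset.Icc (k-1) (k-1) by simp) ha
    have hjD : jj ∈ Dfin σ (D : Set B) (k+1) ℓ := hjj
    constructor
    · have h1 := Dfin_mul hmod haD hjD
      have e1 : max k (k+1) = k + 1 := by omega
      have e2 : max k ℓ = ℓ := by omega
      rwa [e1, e2] at h1
    · have h1 := Dfin_mul hmod hjD haD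
      have e1 : max (k+1) k = k + 1 := by omega
      have e2 : max ℓ k = ℓ := by omega
      rwa [e1, e2] at h1

end HK5

/-- if `D·σ(D) = σ(D)` then `D_{k₂,ℓ}` is a closed two-sided ideal of `D_{k₁,ℓ}`
for `k₁ ≤ k₂ ≤ ℓ`, and `D_{ℓ,∞}` is a closed two-sided ideal of `D_σ`. -/
theorem stmt_5 (σ : B ≃⋆ₐ[ℂ] B) (D : NonUnitalStarSubalgebra ℂ B)
    (hD : IsClosed (D : Set B))
    (hmod : mulSpan (D : Set B) (⇑σ '' (D : Set B)) = ⇑σ '' (D : Set B)) :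
    (∀ k₁ k₂ ℓ : ℤ, k₁ ≤ k₂ → k₂ ≤ ℓ →
      IsClosedIdealIn (Dfin σ (D : Set B) k₁ ℓ) (Dfin σ (D : Set B) k₂ ℓ)) ∧
    (∀ ℓ : ℤ, IsClosedIdealIn (Dsig σ (D : Set B)) (DInfR σ (D : Set B) ℓ)) := by
  constructor
  · intro k₁ k₂ ℓ h12 h2l
    refine ⟨HK5.Dfin_mono h12 le_rfl,
      HK5.Dfin_closed hD hmod (ℓ - k₂).toNat k₂ ℓ (by omega),
      HK5.Dfin_zero _ _,
      fun x hx y hy => HK5.Dfin_add hx hy,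
      fun c x hx => HK5.Dfin_smul c hx,
      fun c hc j hj => ?_⟩
    constructor
    · have h1 := HK5.Dfin_mul hmod hc hj
      have e1 : max k₁ k₂ = k₂ := by omega
      rwa [e1, max_self] at h1
    · have h1 := HK5.Dfin_mul hmod hj hc
      have e1 : max k₂ k₁ = k₂ := by omega
      rwa [e1, max_self] at h1
  · intro ℓ
    have hUV : (⋃ n : ℕ, Dfin σ (D : Set B) ℓ (ℓ + n))
        ⊆ ⋃ n : ℕ, Dfin σ (D : Set B) (-(n:ℤ)) n := by
      intro x hx
      obtain ⟨n, hn⟩ := Set.mem_iUnion.mp hx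
      refine Set.mem_iUnion.mpr ⟨ℓ.natAbs + n, ?_⟩
      refine HK5.Dfin_mono ?_ ?_ hn <;> omega
    refine ⟨closure_mono hUV,
      isClosed_closure,
      subset_closure (Set.mem_iUnion.mpr ⟨0, HK5.Dfin_zero ℓ _⟩),
      ?_, ?_, ?_⟩
    · intro x hx y hy
      refine map_mem_closure₂ continuous_add hx hy ?_
      intro a ha b hb
      obtain ⟨n₁, hn₁⟩ := Set.mem_iUnion.mp ha
      obtain ⟨n₂, hn₂⟩ := Set.mem_iUnion.mp hb
      refine Set.mem_iUnion.mpr ⟨max n₁ n₂,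
        HK5.Dfin_add (HK5.Dfin_mono le_rfl ?_ hn₁) (HK5.Dfin_mono le_rfl ?_ hn₂)⟩ <;> omega
    · intro c x hx
      refine map_mem_closure (continuous_const_smul c) hx ?_
      intro a ha
      obtain ⟨n, hn⟩ := Set.mem_iUnion.mp ha
      exact Set.mem_iUnion.mpr ⟨n, HK5.Dfin_smul c hn⟩
    · intro cc hcc jj hjj
      constructor
      · refine map_mem_closure₂ continuous_mul hcc hjj ?_
        intro v hv u hu
        obtain ⟨m, hm⟩ := Set.mem_iUnion.mp hv
        obtain ⟨n, hn⟩ := Set.mem_iUnion.mp hu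
        have h1 := HK5.Dfin_mul hmod hm hn
        refine Set.mem_iUnion.mpr ⟨(max (m:ℤ) (ℓ + n) - ℓ).toNat, ?_⟩
        refine HK5.Dfin_mono ?_ ?_ h1 <;> omega
      · refine map_mem_closure₂ continuous_mul hjj hcc ?_
        intro u hu v hv
        obtain ⟨n, hn⟩ := Set.mem_iUnion.mp hu
        obtain ⟨m, hm⟩ := Set.mem_iUnion.mp hv
        have h1 := HK5.Dfin_mul hmod hn hm
        refine Set.mem_iUnion.mpr ⟨(max (ℓ + n) (m:ℤ) - ℓ).toNat, ?_⟩
        refine HK5.Dfin_mono ?_ ?_ h1 <;> omega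

end
end

section
/- Let B be a complex C*-algebra, σ a *-automorphism of B, and D ⊆ B a norm-closed *-subalgebra. Then D·σ(D) = σ(D) holds if and only if D·σ^n(D) = σ^n(D) holds for every integer n ≥ 1. -/
noncomputable section

variable {B : Type*} [NonUnitalCStarAlgebra B]

namespace Stmt7Aux

def gen (X Y : Set B) : Set B := {z : B | ∃ x ∈ X, ∃ y ∈ Y, z = x * y}

lemma mulSpan_def (X Y : Set B) :
    mulSpan X Y = closure ↑(Submodule.span ℂ (gen X Y)) := rfl

def mulSpanSub (X Y : Set B) : Submodule ℂ B :=
  (Submodule.span ℂ (gen X Y)).topologicalClosure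

lemma mulSpan_eq_sub (X Y : Set B) : mulSpan X Y = ↑(mulSpanSub X Y) := rfl

lemma mem_mulSpan {X Y : Set B} {x y : B} (hx : x ∈ X) (hy : y ∈ Y) :
    x * y ∈ mulSpan X Y :=
  subset_closure (Submodule.subset_span ⟨x, hx, y, hy, rfl⟩)

lemma mulSpan_le {X Y : Set B} (N : Submodule ℂ B) (hN : IsClosed (N : Set B))
    (h : ∀ x ∈ X, ∀ y ∈ Y, x * y ∈ N) : mulSpan X Y ⊆ (N : Set B) := by
  rw [mulSpan_def]
  apply closure_minimal _ hN
  intro z hz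
  refine Submodule.span_le.mpr ?_ hz
  rintro _ ⟨x, hx, y, hy, rfl⟩
  exact h x hx y hy

def sigLin (σ : B ≃⋆ₐ[ℂ] B) : B →ₗ[ℂ] B :=
  { toFun := σ, map_add' := map_add σ, map_smul' := map_smul σ }

def sigHomeo (σ : B ≃⋆ₐ[ℂ] B) : B ≃ₜ B where
  toFun := σ
  invFun := σ.symm
  left_inv := σ.symm_apply_apply
  right_inv := σ.apply_symm_apply
  continuous_toFun := (NonUnitalStarAlgHom.isometry σ σ.injective).continuous
  continuous_invFun := (NonUnitalStarAlgHom.isometry σ.symm σ.symm.injective).continuous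

lemma image_gen (σ : B ≃⋆ₐ[ℂ] B) (X Y : Set B) :
    ⇑σ '' gen X Y = gen (⇑σ '' X) (⇑σ '' Y) := by
  ext z
  constructor
  · rintro ⟨w, ⟨x, hx, y, hy, rfl⟩, rfl⟩
    exact ⟨σ x, ⟨x, hx, rfl⟩, σ y, ⟨y, hy, rfl⟩, (map_mul σ x y)⟩
  · rintro ⟨_, ⟨x, hx, rfl⟩, _, ⟨y, hy, rfl⟩, rfl⟩
    exact ⟨x * y, ⟨x, hx, y, hy, rfl⟩, map_mul σ x y⟩

lemma image_mulSpan (σ : B ≃⋆ₐ[ℂ] B) (X Y : Set B) :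
    ⇑σ '' mulSpan X Y = mulSpan (⇑σ '' X) (⇑σ '' Y) := by
  have hc : ⇑σ '' closure ↑(Submodule.span ℂ (gen X Y))
      = closure (⇑σ '' ↑(Submodule.span ℂ (gen X Y))) :=
    (sigHomeo σ).image_closure _
  rw [mulSpan_def, mulSpan_def, hc]
  have h1 : ⇑σ '' ↑(Submodule.span ℂ (gen X Y))
      = ↑((Submodule.span ℂ (gen X Y)).map (sigLin σ)) := (Submodule.map_coe (sigLin σ) _).symm
  rw [h1, Submodule.map_span,
    show ⇑(sigLin σ) '' gen X Y = gen (⇑σ '' X) (⇑σ '' Y) from image_gen σ X Y]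

lemma mul_left_mem {x : B} {T : Set B} {N : Submodule ℂ B}
    (hN : IsClosed (N : Set B)) (h : ∀ t ∈ T, x * t ∈ N) {s : B}
    (hs : s ∈ closure (Submodule.span ℂ T : Set B)) : x * s ∈ N := by
  have hsub : closure (Submodule.span ℂ T : Set B) ⊆
      ↑(N.comap (LinearMap.mulLeft ℂ x)) := by
    apply closure_minimal
    · intro z hz
      exact (Submodule.span_le (p := N.comap (LinearMap.mulLeft ℂ x))).mpr
        (fun t ht => h t ht) hz
    · exact hN.preimage (continuous_const.mul continuous_id)
  exact hsub hs

lemma mul_right_mem {x : B} {T : Set B} {N : Submodule ℂ B}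
    (hN : IsClosed (N : Set B)) (h : ∀ t ∈ T, t * x ∈ N) {s : B}
    (hs : s ∈ closure (Submodule.span ℂ T : Set B)) : s * x ∈ N := by
  have hsub : closure (Submodule.span ℂ T : Set B) ⊆
      ↑(N.comap (LinearMap.mulRight ℂ x)) := by
    apply closure_minimal
    · intro z hz
      exact (Submodule.span_le (p := N.comap (LinearMap.mulRight ℂ x))).mpr
        (fun t ht => h t ht) hz
    · exact hN.preimage (continuous_id.mul continuous_const)
  exact hsub hs

end Stmt7Aux

/-- `D·σ(D) = σ(D)` iff `D·σⁿ(D) = σⁿ(D)` for all `n ≥ 1`. -/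
theorem stmt_7 (σ : B ≃⋆ₐ[ℂ] B) (D : NonUnitalStarSubalgebra ℂ B)
    (hD : IsClosed (D : Set B)) :
    mulSpan (D : Set B) (⇑σ '' (D : Set B)) = ⇑σ '' (D : Set B) ↔
      ∀ n : ℤ, 1 ≤ n →
        mulSpan (D : Set B) (⇑(σ ^ n) '' (D : Set B)) = ⇑(σ ^ n) '' (D : Set B) := by
  constructor
  · intro h1 n hn
    refine Int.le_induction
      (motive := fun m _ => mulSpan (D : Set B) (⇑(σ ^ m) '' (D : Set B)) = ⇑(σ ^ m) '' (D : Set B))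
      ?_ ?_ n hn
    · simpa using h1
    · intro n hn ih
      open Stmt7Aux in
      have hpow : ⇑(σ ^ (n + 1)) = ⇑σ ∘ ⇑(σ ^ n) := by
        rw [add_comm, zpow_add, zpow_one]; rfl
      have hcomp : ⇑(σ ^ (n + 1)) '' (D : Set B) = ⇑σ '' (⇑(σ ^ n) '' (D : Set B)) := by
        rw [hpow, Set.image_comp]
      -- products with `σ^n` stay in `σ^n '' D`
      have fact_fe : ∀ f ∈ (D : Set B), ∀ g ∈ (D : Set B),
          f * (σ ^ n) g ∈ ⇑(σ ^ n) '' (D : Set B) := fun f hf g hg =>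
        ih ▸ Stmt7Aux.mem_mulSpan hf ⟨g, hg, rfl⟩
      have fact_d1 : ∀ d ∈ (D : Set B), ∀ f ∈ (D : Set B),
          d * σ f ∈ ⇑σ '' (D : Set B) := fun d hd f hf =>
        h1 ▸ Stmt7Aux.mem_mulSpan hd ⟨f, hf, rfl⟩
      have core : ∀ e ∈ (D : Set B), ∀ z ∈ ⇑(σ ^ (n + 1)) '' (D : Set B),
          σ e * z ∈ ⇑(σ ^ (n + 1)) '' (D : Set B) := by
        rintro e he z ⟨g, hg, rfl⟩
        rw [show (σ ^ (n + 1)) g = σ ((σ ^ n) g) from congrFun hpow g, ← map_mul σ]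
        obtain ⟨g', hg', hgeq⟩ := fact_fe e he g hg
        refine ⟨g', hg', ?_⟩
        rw [show (σ ^ (n + 1)) g' = σ ((σ ^ n) g') from congrFun hpow g', hgeq]
      -- `σ^{n+1} '' D` equals `mulSpan (σ '' D) (σ^{n+1} '' D)`
      have hup : ⇑(σ ^ (n + 1)) '' (D : Set B)
          = mulSpan (⇑σ '' (D : Set B)) (⇑(σ ^ (n + 1)) '' (D : Set B)) := by
        conv_lhs => rw [hcomp, ← ih]
        rw [Stmt7Aux.image_mulSpan, ← hcomp]
      -- the closed submodule with carrier `σ^{n+1} '' D`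
      set N : Submodule ℂ B :=
        (NonUnitalSubalgebra.toSubmodule D.toNonUnitalSubalgebra).map
          (Stmt7Aux.sigLin (σ ^ (n + 1))) with hNdef
      have hNcoe : (N : Set B) = ⇑(σ ^ (n + 1)) '' (D : Set B) := rfl
      have hNclosed : IsClosed (N : Set B) := by
        rw [hNcoe]
        exact (Stmt7Aux.sigHomeo (σ ^ (n + 1))).isClosedMap _ hD
      apply Set.Subset.antisymm
      · -- mulSpan D (σ^{n+1} '' D) ⊆ σ^{n+1} '' D
        have hsub : mulSpan (D : Set B) (⇑(σ ^ (n + 1)) '' (D : Set B)) ⊆ (N : Set B) := by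
          apply Stmt7Aux.mulSpan_le N hNclosed
          intro d hd y hy
          have hy' : y ∈ closure ↑(Submodule.span ℂ
              (Stmt7Aux.gen (⇑σ '' (D : Set B)) (⇑(σ ^ (n + 1)) '' (D : Set B)))) := by
            rw [← Stmt7Aux.mulSpan_def, ← hup]; exact hy
          apply Stmt7Aux.mul_left_mem hNclosed ?_ hy'
          rintro _ ⟨_, ⟨f, hf, rfl⟩, z, hz, rfl⟩
          rw [← mul_assoc]
          obtain ⟨f', hf', hfeq⟩ := fact_d1 d hd f hf
          rw [← hfeq]
          show σ f' * z ∈ (N : Set B)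
          rw [hNcoe]
          exact core f' hf' z hz
        rw [hNcoe] at hsub
        exact hsub
      · -- σ^{n+1} '' D ⊆ mulSpan D (σ^{n+1} '' D)
        intro y hy
        have hy' : y ∈ mulSpan (⇑σ '' (D : Set B)) (⇑(σ ^ (n + 1)) '' (D : Set B)) := by
          rw [← hup]; exact hy
        have hsub : mulSpan (⇑σ '' (D : Set B)) (⇑(σ ^ (n + 1)) '' (D : Set B))
            ⊆ (Stmt7Aux.mulSpanSub (D : Set B) (⇑(σ ^ (n + 1)) '' (D : Set B)) : Set B) := by
          apply Stmt7Aux.mulSpan_le _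
            (Submodule.isClosed_topologicalClosure _)
          intro x hx z hz
          have hx' : x ∈ closure ↑(Submodule.span ℂ
              (Stmt7Aux.gen (D : Set B) (⇑σ '' (D : Set B)))) := by
            rw [← Stmt7Aux.mulSpan_def, h1]; exact hx
          apply Stmt7Aux.mul_right_mem
            (Submodule.isClosed_topologicalClosure _) ?_ hx'
          rintro _ ⟨d, hd, _, ⟨e, he, rfl⟩, rfl⟩
          rw [mul_assoc]
          show d * (σ e * z) ∈ (Stmt7Aux.mulSpanSub (D : Set B)
            (⇑(σ ^ (n + 1)) '' (D : Set B)) : Set B)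
          rw [← Stmt7Aux.mulSpan_eq_sub]
          exact Stmt7Aux.mem_mulSpan hd (core e he z hz)
        rw [← Stmt7Aux.mulSpan_eq_sub] at hsub
        exact hsub hy'

  · intro h
    simpa using h 1 le_rfl

end
end

section
/- Let (B, σ, D) be a Harnisch–Kirchberg system. Then for all integers k₁ ≤ k₂ < k₃ one has D_{k₁,k₂} ∩ D_{k₂+1,k₃} = {0}. -/
noncomputable section

variable {B : Type*} [NonUnitalCStarAlgebra B]

namespace HKAux

variable (σ : B ≃⋆ₐ[ℂ] B) (D : Set B)

/-- `σ^j(D)`. -/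
def Sj (j : ℤ) : Set B := ⇑(σ ^ j) '' D

lemma pow_apply_add (i j : ℤ) (x : B) : (σ ^ (i + j)) x = (σ ^ i) ((σ ^ j) x) := by
  rw [zpow_add]; rfl

lemma pow_zero_apply (x : B) : (σ ^ (0:ℤ)) x = x := by rw [zpow_zero]; rfl

lemma pow_one_apply (x : B) : (σ ^ (1:ℤ)) x = σ x := by rw [zpow_one]

lemma pow_cancel (i : ℤ) (x : B) : (σ ^ i) ((σ ^ (-i)) x) = x := by
  rw [← pow_apply_add]
  have : i + -i = 0 := by omega
  rw [this, pow_zero_apply]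

lemma pow_cancel' (i : ℤ) (x : B) : (σ ^ (-i)) ((σ ^ i) x) = x := by
  rw [← pow_apply_add]
  have : -i + i = 0 := by omega
  rw [this, pow_zero_apply]

lemma cont_pow (j : ℤ) : Continuous ⇑(σ ^ j) :=
  (NonUnitalStarAlgHom.isometry (σ ^ j) (σ ^ j).injective).continuous

variable {σ D}

section subset

lemma Sj_zero_mem (hD : IsCStarSubset D) (j : ℤ) : (0:B) ∈ Sj σ D j := ⟨0, hD.2.1, map_zero _⟩

lemma Sj_add_mem (hD : IsCStarSubset D) (j : ℤ) {x y : B} (hx : x ∈ Sj σ D j) (hy : y ∈ Sj σ D j) :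
    x + y ∈ Sj σ D j := by
  obtain ⟨a, ha, rfl⟩ := hx; obtain ⟨b, hb, rfl⟩ := hy
  exact ⟨a + b, hD.2.2.1 a ha b hb, map_add _ _ _⟩

lemma Sj_smul_mem (hD : IsCStarSubset D) (j : ℤ) (c : ℂ) {x : B} (hx : x ∈ Sj σ D j) : c • x ∈ Sj σ D j := by
  obtain ⟨a, ha, rfl⟩ := hx
  exact ⟨c • a, hD.2.2.2.1 c a ha, map_smul _ _ _⟩

lemma Sj_star_mem (hD : IsCStarSubset D) (j : ℤ) {x : B} (hx : x ∈ Sj σ D j) : star x ∈ Sj σ D j := by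
  obtain ⟨a, ha, rfl⟩ := hx
  exact ⟨star a, hD.2.2.2.2.2 a ha, map_star _ _⟩

lemma Sj_sub_mem (hD : IsCStarSubset D) (j : ℤ) {x y : B} (hx : x ∈ Sj σ D j) (hy : y ∈ Sj σ D j) :
    x - y ∈ Sj σ D j := by
  have : x - y = x + (-1:ℂ) • y := by
    rw [neg_one_smul, ← sub_eq_add_neg]
  rw [this]
  exact Sj_add_mem hD j hx (Sj_smul_mem hD j _ hy)

lemma Sj_mul_mem (hD : IsCStarSubset D) (j : ℤ) {x y : B} (hx : x ∈ Sj σ D j) (hy : y ∈ Sj σ D j) :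
    x * y ∈ Sj σ D j := by
  obtain ⟨a, ha, rfl⟩ := hx; obtain ⟨b, hb, rfl⟩ := hy
  exact ⟨a * b, hD.2.2.2.2.1 a ha b hb, map_mul _ _ _⟩

lemma Sj_isClosed (hD : IsCStarSubset D) (j : ℤ) : IsClosed (Sj σ D j) := by
  have h : Sj σ D j = ⇑(σ ^ (-j)) ⁻¹' D := by
    ext x
    constructor
    · rintro ⟨a, ha, rfl⟩
      show (σ ^ (-j)) ((σ ^ j) a) ∈ D
      rwa [pow_cancel']
    · intro hx
      exact ⟨(σ ^ (-j)) x, hx, pow_cancel σ j x⟩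
  rw [h]
  exact hD.1.preimage (cont_pow σ (-j))

lemma Sj_shift (i j : ℤ) {x : B} (hx : x ∈ Sj σ D j) : (σ ^ i) x ∈ Sj σ D (i + j) := by
  obtain ⟨a, ha, rfl⟩ := hx
  exact ⟨a, ha, pow_apply_add σ i j a⟩

lemma Sj_zero_set : Sj σ D 0 = D := by
  ext x
  constructor
  · rintro ⟨a, ha, rfl⟩; rwa [pow_zero_apply]
  · intro hx; exact ⟨x, hx, pow_zero_apply σ x⟩

lemma Sj_one_set : Sj σ D 1 = ⇑σ '' D := by
  unfold Sj; rw [zpow_one]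

end subset


section main

variable (hD : IsCStarSubset D) (hspan : mulSpan D (⇑σ '' D) = ⇑σ '' D)

include hD hspan

/-- Key closure lemma: to prove `L y ∈ T` for all `y ∈ σ(D)`, it suffices to check it
on generators `e * σ f`. -/
lemma key {L : B → B} (hLc : Continuous L)
    (hLadd : ∀ x y, L (x + y) = L x + L y) (hLsmul : ∀ (c : ℂ) (x : B), L (c • x) = c • L x)
    {T : Set B} (hTc : IsClosed T) (hT0 : (0:B) ∈ T)
    (hTadd : ∀ x ∈ T, ∀ y ∈ T, x + y ∈ T) (hTsmul : ∀ (c : ℂ), ∀ x ∈ T, c • x ∈ T)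
    (hgen : ∀ e ∈ D, ∀ f ∈ D, L (e * σ f) ∈ T) :
    ∀ y ∈ ⇑σ '' D, L y ∈ T := by
  intro y hy
  rw [← hspan] at hy
  have hL0 : L 0 = 0 := by
    have := hLsmul 0 0
    simpa using this
  let M : Submodule ℂ B :=
    { carrier := L ⁻¹' T
      add_mem' := fun {x y} hx hy => by
        simp only [Set.mem_preimage, hLadd] at *
        exact hTadd _ hx _ hy
      zero_mem' := by simp only [Set.mem_preimage, hL0]; exact hT0
      smul_mem' := fun c x hx => by
        simp only [Set.mem_preimage, hLsmul] at *
        exact hTsmul c _ hx }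
  have h1 : {z : B | ∃ x ∈ D, ∃ w ∈ ⇑σ '' D, z = x * w} ⊆ (M : Set B) := by
    rintro z ⟨x, hx, w, ⟨f, hf, rfl⟩, rfl⟩
    exact hgen x hx f hf
  have h2 : (Submodule.span ℂ {z : B | ∃ x ∈ D, ∃ w ∈ ⇑σ '' D, z = x * w} : Set B)
      ⊆ L ⁻¹' T := Submodule.span_le.mpr h1
  exact closure_minimal h2 (hTc.preimage hLc) hy

lemma mem_sigma_of_mul {e f : B} (he : e ∈ D) (hf : f ∈ D) : e * σ f ∈ ⇑σ '' D := by
  rw [← hspan]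
  exact subset_closure (Submodule.subset_span ⟨e, he, σ f, ⟨f, hf, rfl⟩, rfl⟩)

lemma mul_succ (k : ℤ) {x y : B} (hx : x ∈ Sj σ D k) (hy : y ∈ Sj σ D (k + 1)) :
    x * y ∈ Sj σ D (k + 1) := by
  obtain ⟨a, ha, rfl⟩ := hx
  obtain ⟨b, hb, rfl⟩ := hy
  have hb' : (σ ^ (k+1)) b = (σ ^ k) (σ b) := by
    rw [pow_apply_add σ k 1, pow_one_apply]
  rw [hb', ← map_mul]
  obtain ⟨c, hc, hcc⟩ := mem_sigma_of_mul hD hspan ha hb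
  rw [← hcc]
  exact ⟨c, hc, by rw [pow_apply_add σ k 1, pow_one_apply]⟩

lemma mul_up : ∀ (n : ℕ) (k : ℤ) (x y : B), x ∈ Sj σ D k → y ∈ Sj σ D (k + 1 + n) →
    x * y ∈ Sj σ D (k + 1 + n) := by
  intro n
  induction n with
  | zero =>
    intro k x y hx hy
    have h0 : k + 1 + ((0:ℕ):ℤ) = k + 1 := by simp
    rw [h0] at hy ⊢
    exact mul_succ hD hspan k hx hy
  | succ n ih =>
    intro k x y hx hy
    set q : ℤ := k + 1 + n with hq
    have hq1 : k + 1 + ((n+1:ℕ):ℤ) = q + 1 := by push_cast [hq]; ring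
    rw [hq1] at hy ⊢
    obtain ⟨b, hb, rfl⟩ := hy
    have hb' : (σ ^ (q+1)) b = (σ ^ q) (σ b) := by
      rw [pow_apply_add σ q 1, pow_one_apply]
    rw [hb']
    refine key hD hspan (L := fun z => x * (σ ^ q) z)
      (continuous_const.mul (cont_pow σ q))
      (fun u v => by simp only [map_add, mul_add])
      (fun c u => by simp only [map_smul, mul_smul_comm])
      (Sj_isClosed hD (q+1)) (Sj_zero_mem hD (q+1))
      (fun u hu v hv => Sj_add_mem hD (q+1) hu hv)
      (fun c u hu => Sj_smul_mem hD (q+1) c hu)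
      ?_ (σ b) ⟨b, hb, rfl⟩
    intro e he f hf
    show x * (σ ^ q) (e * σ f) ∈ Sj σ D (q + 1)
    have h1 : x * (σ ^ q) (e * σ f) = (x * (σ ^ q) e) * (σ ^ (q+1)) f := by
      rw [map_mul, ← mul_assoc, pow_apply_add σ q 1, pow_one_apply]
    rw [h1]
    have h2 : x * (σ ^ q) e ∈ Sj σ D q := by
      have := ih k x ((σ ^ q) e) hx (by rw [hq]; exact ⟨e, he, rfl⟩)
      rwa [← hq] at this
    exact mul_succ hD hspan q h2 ⟨f, hf, rfl⟩

lemma mul_lt {i j : ℤ} (hij : i < j) {x y : B} (hx : x ∈ Sj σ D i) (hy : y ∈ Sj σ D j) :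
    x * y ∈ Sj σ D j := by
  set n : ℕ := (j - i - 1).toNat with hn
  have hj : j = i + 1 + (n : ℤ) := by rw [hn]; omega
  rw [hj] at hy ⊢
  exact mul_up hD hspan n i x y hx hy

lemma mul_lt' {i j : ℤ} (hij : i < j) {x y : B} (hx : x ∈ Sj σ D i) (hy : y ∈ Sj σ D j) :
    y * x ∈ Sj σ D j := by
  have h : y * x = star (star x * star y) := by simp [star_mul]
  rw [h]
  exact Sj_star_mem hD j (mul_lt hD hspan hij (Sj_star_mem hD i hx) (Sj_star_mem hD j hy))

lemma annih (u : B) (q : ℤ) (hu : ∀ x ∈ D, u * (σ ^ q) x = 0) :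
    ∀ (n : ℕ), ∀ x ∈ D, u * (σ ^ (q + n)) x = 0 := by
  intro n
  induction n with
  | zero => intro x hx; simpa using hu x hx
  | succ n ih =>
    intro x hx
    have h1 : (σ ^ (q + ((n+1:ℕ):ℤ))) x = (σ ^ (q + n)) (σ x) := by
      have : q + ((n+1:ℕ):ℤ) = (q + n) + 1 := by push_cast; ring
      rw [this, pow_apply_add σ (q + n) 1, pow_one_apply]
    rw [h1]
    refine key hD hspan (L := fun z => u * (σ ^ (q + n)) z)
      (continuous_const.mul (cont_pow σ (q + n)))
      (fun a b => by simp only [map_add, mul_add])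
      (fun c a => by simp only [map_smul, mul_smul_comm])
      (T := {0}) isClosed_singleton rfl
      (fun a ha b hb => by simp only [Set.mem_singleton_iff] at *; rw [ha, hb, add_zero])
      (fun c a ha => by simp only [Set.mem_singleton_iff] at *; rw [ha, smul_zero])
      ?_ (σ x) ⟨x, hx, rfl⟩
    intro e he f hf
    show u * (σ ^ (q + n)) (e * σ f) = 0
    rw [map_mul, ← mul_assoc, ih e he, zero_mul]

end main

section main2

variable (hD : IsCStarSubset D) (hspan : mulSpan D (⇑σ '' D) = ⇑σ '' D)
  (hint : D ∩ ⇑σ '' D = {0})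
  (hnd : ∀ d ∈ D, (∀ e ∈ D, d * σ e = 0 ∧ σ e * d = 0) → d = 0)

include hD hspan hint hnd

lemma pair0 : ∀ (n : ℕ) (x : B), x ∈ D → x ∈ Sj σ D ((n:ℤ) + 1) → x = 0 := by
  intro n
  induction n with
  | zero =>
    intro x hx hx1
    have h01 : ((0:ℕ):ℤ) + 1 = 1 := by simp
    rw [h01, Sj_one_set] at hx1
    have hmem : x ∈ D ∩ ⇑σ '' D := ⟨hx, hx1⟩
    rw [hint] at hmem
    exact hmem
  | succ n ih =>
    intro x hx hx2
    have hcast : ((n+1:ℕ):ℤ) + 1 = ((n:ℤ) + 1) + 1 := by push_cast; ring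
    rw [hcast] at hx2
    have key' : ∀ y : B, y ∈ D → y ∈ Sj σ D ((n:ℤ)+1+1) → ∀ e ∈ D, y * σ e = 0 := by
      intro y hy hy2 e he
      have h1 : y * σ e ∈ Sj σ D 1 := by
        rw [Sj_one_set]; exact mem_sigma_of_mul hD hspan hy he
      have h2 : y * σ e ∈ Sj σ D ((n:ℤ)+1+1) := by
        refine mul_lt' hD hspan (show (1:ℤ) < (n:ℤ)+1+1 by omega) ?_ hy2
        rw [Sj_one_set]; exact ⟨e, he, rfl⟩
      have h3 : (σ ^ (-1:ℤ)) (y * σ e) ∈ Sj σ D 0 := by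
        have := Sj_shift (-1) 1 h1
        rwa [show (-1:ℤ) + 1 = 0 by omega] at this
      have h4 : (σ ^ (-1:ℤ)) (y * σ e) ∈ Sj σ D ((n:ℤ)+1) := by
        have := Sj_shift (-1) ((n:ℤ)+1+1) h2
        rwa [show (-1:ℤ) + ((n:ℤ)+1+1) = (n:ℤ)+1 by omega] at this
      rw [Sj_zero_set] at h3
      have h5 : (σ ^ (-1:ℤ)) (y * σ e) = 0 := ih _ h3 h4
      have h6 := congrArg (⇑(σ ^ (1:ℤ))) h5
      rwa [show (1:ℤ) = -(-1:ℤ) by omega, pow_cancel, map_zero] at h6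
    refine hnd x hx fun e he => ⟨key' x hx hx2 e he, ?_⟩
    have hsx : star x ∈ D := hD.2.2.2.2.2 x hx
    have hsx2 : star x ∈ Sj σ D ((n:ℤ)+1+1) := Sj_star_mem hD _ hx2
    have h7 : star x * σ (star e) = 0 :=
      key' (star x) hsx hsx2 (star e) (hD.2.2.2.2.2 e he)
    have h8 : star (star x * σ (star e)) = σ e * x := by
      rw [star_mul, star_star, ← map_star, star_star]
    rw [← h8, h7, star_zero]

lemma pairS {k j : ℤ} (hkj : k < j) {x : B} (hk : x ∈ Sj σ D k) (hj : x ∈ Sj σ D j) :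
    x = 0 := by
  set n : ℕ := (j - k - 1).toNat with hn
  have h0 : (σ ^ (-k)) x ∈ Sj σ D 0 := by
    have := Sj_shift (-k) k hk
    rwa [show -k + k = 0 by omega] at this
  have h1 : (σ ^ (-k)) x ∈ Sj σ D ((n:ℤ)+1) := by
    have := Sj_shift (-k) j hj
    rwa [show -k + j = (n:ℤ)+1 by omega] at this
  rw [Sj_zero_set] at h0
  have h2 := pair0 hD hspan hint hnd n _ h0 h1
  have h3 := congrArg (⇑(σ ^ k)) h2
  rwa [pow_cancel, map_zero] at h3

lemma claimC : ∀ (n : ℕ) (s : Finset ℤ) (k : ℤ) (d : B) (f : ℤ → B), s.card = n →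
    d ∈ Sj σ D k → (∀ j ∈ s, k < j) → (∀ j ∈ s, f j ∈ Sj σ D j) →
    d = ∑ j ∈ s, f j → d = 0 := by
  intro n
  induction n with
  | zero =>
    intro s k d f hcard _ _ _ hsum
    rw [Finset.card_eq_zero] at hcard
    subst hcard
    simpa using hsum
  | succ n ih =>
    intro s k d f hcard hdk hbound hmem hsum
    have hne : s.Nonempty := by rw [← Finset.card_pos, hcard]; omega
    set a := s.min' hne with ha_def
    have ha : a ∈ s := s.min'_mem hne
    have hka : k < a := hbound a ha
    have hErase : ∀ j ∈ s.erase a, a < j := by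
      intro j hj
      exact lt_of_le_of_ne (s.min'_le j (Finset.mem_of_mem_erase hj))
        (Ne.symm (Finset.ne_of_mem_erase hj))
    have hsum' : d = f a + ∑ j ∈ s.erase a, f j := by
      rw [hsum, ← Finset.add_sum_erase s f ha]
    set u := d - f a with hu_def
    have hu_sum : u = ∑ j ∈ s.erase a, f j := by rw [hu_def, hsum']; abel
    have hfa : f a ∈ Sj σ D a := hmem a ha
    have hcard' : (s.erase a).card = n := by
      rw [Finset.card_erase_of_mem ha, hcard]
      omega
    have hA : ∀ c ∈ D, u * (σ ^ a) c = 0 := by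
      intro c hc
      refine ih (s.erase a) a (u * (σ ^ a) c) (fun j => f j * (σ ^ a) c) hcard' ?_ hErase ?_ ?_
      · have h1 : d * (σ ^ a) c ∈ Sj σ D a := mul_lt hD hspan hka hdk ⟨c, hc, rfl⟩
        have h2 : f a * (σ ^ a) c ∈ Sj σ D a := Sj_mul_mem hD a hfa ⟨c, hc, rfl⟩
        have h3 : u * (σ ^ a) c = d * (σ ^ a) c - f a * (σ ^ a) c := by
          rw [hu_def, sub_mul]
        rw [h3]
        exact Sj_sub_mem hD a h1 h2
      · intro j hj
        exact mul_lt' hD hspan (hErase j hj) ⟨c, hc, rfl⟩ (hmem j (Finset.mem_of_mem_erase hj))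
      · rw [hu_sum, Finset.sum_mul]
    have hA' : ∀ (j : ℤ), a ≤ j → ∀ x ∈ D, u * (σ ^ j) x = 0 := by
      intro j hj x hx
      have := annih hD hspan u a hA (j - a).toNat x hx
      rwa [show a + ((j - a).toNat : ℤ) = j by omega] at this
    have hustar : u * star u = 0 := by
      have hstaru : star u = ∑ j ∈ s.erase a, star (f j) := by rw [hu_sum, star_sum]
      have h8 : u * star u = ∑ j ∈ s.erase a, u * star (f j) := by
        rw [hstaru, Finset.mul_sum]
      rw [h8]
      apply Finset.sum_eq_zero
      intro j hj
      obtain ⟨x, hx, hxe⟩ := Sj_star_mem hD j (hmem j (Finset.mem_of_mem_erase hj))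
      rw [← hxe]
      exact hA' j (le_of_lt (hErase j hj)) x hx
    have hu0 : u = 0 := by
      have hnorm : ‖u‖ * ‖u‖ = 0 := by
        rw [← CStarRing.norm_self_mul_star, hustar, norm_zero]
      exact norm_eq_zero.mp (mul_self_eq_zero.mp hnorm)
    have hd_fa : d = f a := by
      have := sub_eq_zero.mp hu0
      exact this
    refine pairS hD hspan hint hnd hka hdk ?_
    rw [hd_fa]
    exact hfa

lemma main_aux : ∀ (n : ℕ) (k₁ k₂ k₃ : ℤ), k₂ - k₁ = n → k₂ < k₃ →
    ∀ x : B, x ∈ Dfin σ D k₁ k₂ → x ∈ Dfin σ D (k₂ + 1) k₃ → x = 0 := by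
  intro n
  induction n with
  | zero =>
    intro k₁ k₂ k₃ hk h23 x hx1 hx2
    have hk12 : k₂ = k₁ := by omega
    subst hk12
    obtain ⟨f, hf, hxf⟩ := hx1
    obtain ⟨g, hg, hxg⟩ := hx2
    rw [Finset.Icc_self, Finset.sum_singleton] at hxf
    have hfmem : f (k₂-1) ∈ Sj σ D (k₂-1) := by
      refine hf _ ?_
      rw [Finset.Icc_self]
      exact Finset.mem_singleton_self _
    refine claimC hD hspan hint hnd (Finset.Icc (k₂+1-1) (k₃-1)).card
      (Finset.Icc (k₂+1-1) (k₃-1)) (k₂-1) x g rfl ?_ ?_ hg hxg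
    · rw [hxf]; exact hfmem
    · intro j hj
      simp only [Finset.mem_Icc] at hj
      omega
  | succ n ih =>
    intro k₁ k₂ k₃ hk h23 x hx1 hx2
    have hx2' := hx2
    obtain ⟨f, hf, hxf⟩ := hx1
    obtain ⟨g, hg, hxg⟩ := hx2
    have hnorm21 : k₂ + 1 - 1 = k₂ := by ring
    rw [hnorm21] at hg hxg
    have hsplit : Finset.Icc (k₁-1) (k₂-1) = insert (k₁-1) (Finset.Icc k₁ (k₂-1)) := by
      ext j
      simp only [Finset.mem_Icc, Finset.mem_insert]
      omega
    have hnotmem : (k₁-1) ∉ Finset.Icc k₁ (k₂-1) := by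
      simp only [Finset.mem_Icc]
      omega
    rw [hsplit, Finset.sum_insert hnotmem] at hxf
    set h : ℤ → B := fun j => if j < k₂ then -(f j) else g j with hh_def
    have hunion : Finset.Icc k₁ (k₃-1) = Finset.Icc k₁ (k₂-1) ∪ Finset.Icc k₂ (k₃-1) := by
      ext j
      simp only [Finset.mem_Icc, Finset.mem_union]
      omega
    have hdisj : Disjoint (Finset.Icc k₁ (k₂-1)) (Finset.Icc k₂ (k₃-1)) := by
      rw [Finset.disjoint_left]
      intro j hj1 hj2
      simp only [Finset.mem_Icc] at hj1 hj2
      omega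
    have hsum1 : ∑ j ∈ Finset.Icc k₁ (k₂-1), h j = -∑ j ∈ Finset.Icc k₁ (k₂-1), f j := by
      rw [← Finset.sum_neg_distrib]
      refine Finset.sum_congr rfl fun j hj => ?_
      simp only [Finset.mem_Icc] at hj
      rw [hh_def]
      simp only []
      rw [if_pos (by omega)]
    have hsum2 : ∑ j ∈ Finset.Icc k₂ (k₃-1), h j = ∑ j ∈ Finset.Icc k₂ (k₃-1), g j := by
      refine Finset.sum_congr rfl fun j hj => ?_
      simp only [Finset.mem_Icc] at hj
      rw [hh_def]
      simp only []
      rw [if_neg (by omega)]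
    have hbot : f (k₁-1) = ∑ j ∈ Finset.Icc k₁ (k₃-1), h j := by
      rw [hunion, Finset.sum_union hdisj, hsum1, hsum2, ← hxg, hxf]
      abel
    have hbot0 : f (k₁-1) = 0 := by
      refine claimC hD hspan hint hnd (Finset.Icc k₁ (k₃-1)).card (Finset.Icc k₁ (k₃-1))
        (k₁-1) (f (k₁-1)) h rfl ?_ ?_ ?_ hbot
      · exact hf _ (by simp only [Finset.mem_Icc]; omega)
      · intro j hj
        simp only [Finset.mem_Icc] at hj
        omega
      · intro j hj
        simp only [Finset.mem_Icc] at hj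
        rw [hh_def]
        simp only []
        by_cases hjk : j < k₂
        · rw [if_pos hjk]
          have hmemf : f j ∈ Sj σ D j := hf _ (by simp only [Finset.mem_Icc]; omega)
          have := Sj_smul_mem hD j (-1:ℂ) hmemf
          rwa [neg_one_smul] at this
        · rw [if_neg hjk]
          exact hg _ (by simp only [Finset.mem_Icc]; omega)
    have hxsum : x = ∑ j ∈ Finset.Icc k₁ (k₂-1), f j := by
      rw [hxf, hbot0, zero_add]
    have hx1' : x ∈ Dfin σ D (k₁+1) k₂ := by
      refine ⟨f, ?_, ?_⟩
      · rw [show k₁+1-1 = k₁ by ring]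
        intro j hj
        simp only [Finset.mem_Icc] at hj
        exact hf _ (by simp only [Finset.mem_Icc]; omega)
      · rw [show k₁+1-1 = k₁ by ring]
        exact hxsum
    exact ih (k₁+1) k₂ k₃ (by omega) h23 x hx1' hx2'

end main2

end HKAux

/-- in a Harnisch–Kirchberg system, `D_{k₁,k₂} ∩ D_{k₂+1,k₃} = {0}` for
`k₁ ≤ k₂ < k₃`. -/
theorem stmt_8 (σ : B ≃⋆ₐ[ℂ] B) (D : Set B) (hHK : IsHKSystem σ D)
    (k₁ k₂ k₃ : ℤ) (h12 : k₁ ≤ k₂) (h23 : k₂ < k₃) :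
    Dfin σ D k₁ k₂ ∩ Dfin σ D (k₂ + 1) k₃ = {0} := by
  obtain ⟨hD, hspan, hint, hnd⟩ := hHK
  ext x
  simp only [Set.mem_inter_iff, Set.mem_singleton_iff]
  constructor
  · rintro ⟨h1, h2⟩
    exact HKAux.main_aux hD hspan hint hnd (k₂ - k₁).toNat k₁ k₂ k₃ (by omega) h23 x h1 h2
  · rintro rfl
    exact ⟨⟨fun _ => 0, fun j _ => HKAux.Sj_zero_mem hD j, by simp⟩,
      ⟨fun _ => 0, fun j _ => HKAux.Sj_zero_mem hD j, by simp⟩⟩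

end
end

section
/- Let (B, σ, D) be a Harnisch–Kirchberg system and let I be a closed two-sided ideal of the C*-algebra D_σ with σ(I) = I. Then I ∩ D is a semi-invariant closed two-sided ideal of D; that is, I ∩ D is a closed two-sided ideal of D and j·σ(e) ∈ σ(I ∩ D) for all j ∈ I ∩ D and e ∈ D. -/
noncomputable section

variable {B : Type*} [NonUnitalCStarAlgebra B]

lemma zpow_mem_Dsig (σ : B ≃⋆ₐ[ℂ] B) (D : Set B) (hD0 : (0:B) ∈ D)
    (j : ℤ) (x : B) (hx : x ∈ D) : (σ ^ j) x ∈ Dsig σ D := by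
  apply subset_closure
  refine Set.mem_iUnion.2 ⟨j.natAbs + 2, ?_⟩
  have hjmem : j ∈ Finset.Icc (-(((j.natAbs + 2 : ℕ)):ℤ) - 1) ((j.natAbs + 2 : ℕ) - 1) := by
    simp only [Finset.mem_Icc]
    omega
  refine ⟨fun i => if i = j then (σ ^ j) x else 0, fun i _ => ?_, ?_⟩
  · by_cases h : i = j
    · subst h; simp only [if_pos rfl]; exact ⟨x, hx, rfl⟩
    · simp only [if_neg h]; exact ⟨0, hD0, map_zero _⟩
  · rw [Finset.sum_ite_eq' _ j (fun _ => (σ ^ j) x), if_pos hjmem]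

lemma mem_Dsig_of_mem_D (σ : B ≃⋆ₐ[ℂ] B) (D : Set B) (hD0 : (0:B) ∈ D)
    (x : B) (hx : x ∈ D) : x ∈ Dsig σ D := by
  have := zpow_mem_Dsig σ D hD0 0 x hx
  rw [zpow_zero] at this; exact this

lemma sigma_mem_Dsig (σ : B ≃⋆ₐ[ℂ] B) (D : Set B) (hD0 : (0:B) ∈ D)
    (x : B) (hx : x ∈ D) : σ x ∈ Dsig σ D := by
  have := zpow_mem_Dsig σ D hD0 1 x hx
  rwa [zpow_one] at this

/-- if `I` is a σ-invariant closed two-sided ideal of `D_σ`, then `I ∩ D` is a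
semi-invariant closed two-sided ideal of `D`. -/
theorem stmt_13 (σ : B ≃⋆ₐ[ℂ] B) (D : Set B) (hHK : IsHKSystem σ D)
    (I : Set B) (hI : IsClosedIdealIn (Dsig σ D) I) (hinv : ⇑σ '' I = I) :
    IsClosedIdealIn D (I ∩ D) ∧
    ∀ j ∈ I ∩ D, ∀ e ∈ D, j * σ e ∈ ⇑σ '' (I ∩ D) := by
  obtain ⟨⟨hDcl, hD0, hDadd, hDsmul, hDmul, hDstar⟩, hms, hcap, hfaith⟩ := hHK
  obtain ⟨hIsub, hIcl, hI0, hIadd, hIsmul, hIideal⟩ := hI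
  have hDsub : ∀ x ∈ D, x ∈ Dsig σ D := fun x hx => mem_Dsig_of_mem_D σ D hD0 x hx
  constructor
  · refine ⟨Set.inter_subset_right, hIcl.inter hDcl, ⟨hI0, hD0⟩, ?_, ?_, ?_⟩
    · exact fun x hx y hy => ⟨hIadd x hx.1 y hy.1, hDadd x hx.2 y hy.2⟩
    · exact fun c x hx => ⟨hIsmul c x hx.1, hDsmul c x hx.2⟩
    · intro c hc j hj
      obtain ⟨h1, h2⟩ := hIideal c (hDsub c hc) j hj.1
      exact ⟨⟨h1, hDmul c hc j hj.2⟩, ⟨h2, hDmul j hj.2 c hc⟩⟩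
  · intro j hj e he
    -- j * σ e ∈ mulSpan D (σ '' D) = σ '' D
    have hmem : j * σ e ∈ mulSpan D (⇑σ '' D) := by
      apply subset_closure
      exact Submodule.subset_span ⟨j, hj.2, σ e, ⟨e, he, rfl⟩, rfl⟩
    rw [hms] at hmem
    obtain ⟨x, hxD, hxeq⟩ := hmem
    -- j * σ e ∈ I since σ e ∈ Dsig and I is an ideal
    have hjI : j * σ e ∈ I := (hIideal (σ e) (sigma_mem_Dsig σ D hD0 e he) j hj.1).2
    -- σ x ∈ I, so x ∈ I by σ-invariance
    have hσxI : σ x ∈ I := hxeq ▸ hjI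
    have hxI : x ∈ I := by
      rw [← hinv] at hσxI
      obtain ⟨y, hyI, hyeq⟩ := hσxI
      have : y = x := σ.injective hyeq
      rwa [← this]
    exact ⟨x, ⟨hxI, hxD⟩, hxeq⟩

end
end

section
/- Let A be a complex C*-algebra and φ₁, φ₂ : A → 𝓜(A) two *-homomorphisms into its multiplier algebra. Suppose that for every closed two-sided ideal J of A, the norm-closed linear span of {ι(a)·φ₁(x)·ι(b) : a, b ∈ A, x ∈ J} equals the norm-closed linear span of {ι(a)·φ₂(x)·ι(b) : a, b ∈ A, x ∈ J} (both are subsets of ι(A)). Then for every closed two-sided ideal J of A, {a ∈ A : φ₁(a) ∈ 𝓜(A, J)} = {a ∈ A : φ₂(a) ∈ 𝓜(A, J)}; that is, φ₁⁻¹(φ₁(A) ∩ 𝓜(A, J)) = φ₂⁻¹(φ₂(A) ∩ 𝓜(A, J)). -/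
open scoped MultiplierAlgebra ZeroAtInfty

noncomputable section

variable {A : Type*} [NonUnitalCStarAlgebra A]

/-- The canonical embedding of a C*-algebra into its multiplier algebra (realized as the
double centralizer algebra), as a non-unital *-homomorphism. -/
noncomputable def iota : A →⋆ₙₐ[ℂ] 𝓜(ℂ, A) := DoubleCentralizer.coeHom

/-- Closed two-sided ideal of a C*-algebra, as a predicate on subsets. -/
def IsIdealSet (J : Set A) : Prop :=
  IsClosed J ∧ (0 : A) ∈ J ∧ (∀ x ∈ J, ∀ y ∈ J, x + y ∈ J) ∧
    (∀ (c : ℂ), ∀ x ∈ J, c • x ∈ J) ∧ ∀ a : A, ∀ j ∈ J, a * j ∈ J ∧ j * a ∈ J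

/-- `𝓜(A, J) = {x ∈ 𝓜(A) : x·ι(a) ∈ ι(J) for all a ∈ A}`. -/
def MIdeal (J : Set A) : Set 𝓜(ℂ, A) :=
  {x : 𝓜(ℂ, A) | ∀ a : A, x * iota a ∈ ⇑(iota (A := A)) '' J}

/-- The norm-closed linear span of `{ι(a)·φ(x)·ι(b) : a, b ∈ A, x ∈ J}` in `𝓜(A)`. -/
def genSpan (φ : A →⋆ₙₐ[ℂ] 𝓜(ℂ, A)) (J : Set A) : Set 𝓜(ℂ, A) :=
  closure ↑(Submodule.span ℂ
    {z : 𝓜(ℂ, A) | ∃ a b : A, ∃ x ∈ J, z = iota a * φ x * iota b})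

/-! ### Auxiliary lemmas -/

lemma iota_norm (a : A) : ‖iota a‖ = ‖a‖ := by
  rw [← DoubleCentralizer.norm_fst]
  show ‖ContinuousLinearMap.mul ℂ A a‖ = ‖a‖
  exact ContinuousLinearMap.opNorm_mul_apply ℂ A a

lemma iota_injective : Function.Injective (iota (A := A)) := by
  intro a b hab
  have : ‖a - b‖ = 0 := by rw [← iota_norm, map_sub, hab, sub_self, norm_zero]
  rwa [norm_eq_zero, sub_eq_zero] at this

lemma iota_isometry : Isometry (iota (A := A)) :=
  AddMonoidHomClass.isometry_of_norm _ iota_norm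

lemma eq_zero_of_forall_left {d : A} (h : ∀ z : A, z * d = 0) : d = 0 := by
  have := h (star d)
  have h2 : ‖d‖ * ‖d‖ = 0 := by rw [← CStarRing.norm_star_mul_self, this, norm_zero]
  rcases mul_self_eq_zero.mp h2 with h3
  simpa [norm_eq_zero] using h3

lemma eq_zero_of_forall_right {d : A} (h : ∀ z : A, d * z = 0) : d = 0 := by
  have := h (star d)
  have h2 : ‖d‖ * ‖d‖ = 0 := by rw [← CStarRing.norm_self_mul_star, this, norm_zero]
  rcases mul_self_eq_zero.mp h2 with h3
  simpa [norm_eq_zero] using h3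

lemma iotaFst (a x : A) : (iota a).fst x = a * x := rfl

lemma iotaSnd (a x : A) : (iota a).snd x = x * a := rfl

lemma fst_map_mul (m : 𝓜(ℂ, A)) (a x : A) : m.fst (a * x) = m.fst a * x := by
  have key : ∀ z : A, z * (m.fst (a * x) - m.fst a * x) = 0 := by
    intro z
    have h1 : z * m.fst (a * x) = m.snd z * (a * x) := (m.central z (a * x)).symm
    have h2 : z * m.fst a = m.snd z * a := (m.central z a).symm
    rw [mul_sub, h1, ← mul_assoc, ← h2, mul_assoc, sub_self]
  have := eq_zero_of_forall_left key
  rwa [sub_eq_zero] at this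

lemma snd_map_mul (m : 𝓜(ℂ, A)) (x a : A) : m.snd (x * a) = x * m.snd a := by
  have key : ∀ z : A, (m.snd (x * a) - x * m.snd a) * z = 0 := by
    intro z
    have h1 : m.snd (x * a) * z = (x * a) * m.fst z := m.central (x * a) z
    have h2 : m.snd a * z = a * m.fst z := m.central a z
    rw [sub_mul, h1, mul_assoc, ← h2, mul_assoc, sub_self]
  have := eq_zero_of_forall_right key
  rwa [sub_eq_zero] at this

lemma mul_iota (m : 𝓜(ℂ, A)) (a : A) : m * iota a = iota (m.fst a) := by
  refine DoubleCentralizer.ext ℂ A _ _ (Prod.ext ?_ ?_)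
  · refine ContinuousLinearMap.ext fun x => ?_
    show m.fst ((iota a).fst x) = (iota (m.fst a)).fst x
    rw [iotaFst, iotaFst, fst_map_mul]
  · refine ContinuousLinearMap.ext fun x => ?_
    show (iota a).snd (m.snd x) = (iota (m.fst a)).snd x
    rw [iotaSnd, iotaSnd]
    exact m.central x a

lemma iota_mul (a : A) (m : 𝓜(ℂ, A)) : iota a * m = iota (m.snd a) := by
  refine DoubleCentralizer.ext ℂ A _ _ (Prod.ext ?_ ?_)
  · refine ContinuousLinearMap.ext fun x => ?_
    show (iota a).fst (m.fst x) = (iota (m.snd a)).fst x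
    rw [iotaFst, iotaFst]
    exact (m.central a x).symm
  · refine ContinuousLinearMap.ext fun x => ?_
    show m.snd ((iota a).snd x) = (iota (m.snd a)).snd x
    rw [iotaSnd, iotaSnd, snd_map_mul]

private lemma arith_aux {m s t : ℝ} (hm : 0 < m) (hs : 0 < s) (hsq : s ^ 2 = m)
    {ft : ℝ} (hft : ft = 1 - (m * t ^ 2 + 1)⁻¹) :
    |(t - t * ft) - (ft * t - ft * (t * ft))| ≤ 1 / (2 * s) := by
  have hu : (0:ℝ) < m * t ^ 2 + 1 := by positivity
  have hFt : (t - t * ft) - (ft * t - ft * (t * ft))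
      = t / (m * t ^ 2 + 1) ^ 2 := by
    have h1f : 1 - ft = (m * t ^ 2 + 1)⁻¹ := by rw [hft]; ring
    have heq : (t - t * ft) - (ft * t - ft * (t * ft))
        = (1 - ft) * t * (1 - ft) := by ring
    rw [heq, h1f]
    rw [eq_div_iff (by positivity)]
    field_simp
  have hu1 : (1:ℝ) ≤ m * t ^ 2 + 1 := by nlinarith [sq_nonneg t]
  have huge : 2 * s * |t| ≤ m * t ^ 2 + 1 := by
    nlinarith [sq_nonneg (s * |t| - 1), sq_abs t]
  have huge2 : 2 * s * |t| ≤ (m * t ^ 2 + 1) ^ 2 := by nlinarith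
  rw [hFt, abs_div, abs_of_pos (by positivity : (0:ℝ) < (m * t ^ 2 + 1) ^ 2)]
  rw [div_le_div_iff₀ (by positivity) (by positivity)]
  nlinarith

/-- The key approximation lemma: if `a * y ∈ J` for all `a`, then `y ∈ J`. -/
lemma key_mem {J : Set A} (hJ : IsIdealSet J) {y : A} (hy : ∀ a : A, a * y ∈ J) : y ∈ J := by
  rw [← hJ.1.closure_eq, Metric.mem_closure_iff]
  intro ε hε
  obtain ⟨m, s, hm_pos, hs_pos, hs_sq, hδ⟩ :
      ∃ m s : ℝ, 0 < m ∧ 0 < s ∧ s ^ 2 = m ∧ 1 / (2 * s) < ε ^ 2 := by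
    refine ⟨((2 * ε ^ 2)⁻¹ + 1) ^ 2, (2 * ε ^ 2)⁻¹ + 1, by positivity, by positivity, rfl, ?_⟩
    rw [div_lt_iff₀ (by positivity)]
    have h2 : ε ^ 2 * (2 * ((2 * ε ^ 2)⁻¹ + 1)) = 1 + 2 * ε ^ 2 := by
      field_simp
    nlinarith
  set f : ℝ → ℝ := fun t => 1 - (m * t ^ 2 + 1)⁻¹ with hf_def
  have hden : ∀ t : ℝ, m * t ^ 2 + 1 ≠ 0 := fun t => by positivity
  have hf_cont : Continuous f := by
    apply continuous_const.sub
    exact ((continuous_const.mul (continuous_pow 2)).add continuous_const).inv₀ hden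
  have hf0 : f 0 = 0 := by simp [hf_def]
  set h : A := y * star y with hh_def
  have hsa : IsSelfAdjoint h := IsSelfAdjoint.mul_star_self y
  set c : A := cfcₙ f h with hc_def
  have hc_sa : IsSelfAdjoint c := cfcₙ_predicate f h
  refine ⟨c * y, hy c, ?_⟩
  rw [dist_eq_norm]
  set d : A := y - c * y with hd_def
  -- d * star d as a functional calculus element
  have hexp : d * star d = (h - h * c) - (c * h - c * (h * c)) := by
    rw [hd_def, hh_def, star_sub, star_mul, hc_sa.star_eq]
    noncomm_ring
  have hid : cfcₙ (fun t : ℝ => t) h = h := cfcₙ_id' ℝ h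
  have h1 : cfcₙ (fun t : ℝ => t * f t) h = h * c := by
    rw [cfcₙ_mul _ _ h (by fun_prop) (by simp) (by fun_prop) hf0, hid]
  have h2 : cfcₙ (fun t : ℝ => f t * t) h = c * h := by
    rw [cfcₙ_mul _ _ h (by fun_prop) hf0 (by fun_prop) (by simp), hid]
  have h3 : cfcₙ (fun t : ℝ => f t * (t * f t)) h = c * (h * c) := by
    rw [cfcₙ_mul _ _ h (by fun_prop) hf0 (by fun_prop) (by simp [hf0]), h1]
  have h4 : cfcₙ (fun t : ℝ => (t - t * f t) - (f t * t - f t * (t * f t))) h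
      = d * star d := by
    rw [hexp]
    rw [cfcₙ_sub (fun t : ℝ => t - t * f t) (fun t : ℝ => f t * t - f t * (t * f t)) h
      (by fun_prop) (by simp [hf0]) (by fun_prop) (by simp [hf0])]
    rw [cfcₙ_sub (fun t : ℝ => t) (fun t : ℝ => t * f t) h
      (by fun_prop) (by simp) (by fun_prop) (by simp [hf0])]
    rw [cfcₙ_sub (fun t : ℝ => f t * t) (fun t : ℝ => f t * (t * f t)) h
      (by fun_prop) (by simp [hf0]) (by fun_prop) (by simp [hf0])]
    rw [hid, h1, h2, h3]
  have hbound : ∀ t : ℝ, ‖(t - t * f t) - (f t * t - f t * (t * f t))‖ ≤ 1 / (2 * s) := by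
    intro t
    rw [Real.norm_eq_abs]
    exact arith_aux hm_pos hs_pos hs_sq (by rw [hf_def])
  have hnorm : ‖d * star d‖ ≤ 1 / (2 * s) := by
    rw [← h4]
    exact norm_cfcₙ_le fun t _ => hbound t
  have hd2 : ‖d‖ * ‖d‖ ≤ 1 / (2 * s) := by
    rw [← CStarRing.norm_self_mul_star]; exact hnorm
  have hfin : ‖d‖ ^ 2 < ε ^ 2 := by
    rw [sq]; exact lt_of_le_of_lt hd2 hδ
  exact lt_of_pow_lt_pow_left₀ 2 hε.le hfin

lemma mem_iota_image {J : Set A} {x : A} : iota x ∈ ⇑(iota (A := A)) '' J ↔ x ∈ J := by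
  constructor
  · rintro ⟨j, hj, hje⟩
    rwa [← iota_injective hje]
  · exact fun hx => ⟨x, hx, rfl⟩

lemma iota_image_isClosed {J : Set A} (hJ : IsClosed J) :
    IsClosed (⇑(iota (A := A)) '' J) :=
  iota_isometry.isClosedEmbedding.isClosedMap _ hJ

lemma MIdeal_isClosed {J : Set A} (hJ : IsIdealSet J) : IsClosed (MIdeal (A := A) J) := by
  have heq : MIdeal (A := A) J
      = ⋂ a : A, (fun x : 𝓜(ℂ, A) => x * iota a) ⁻¹' (⇑(iota (A := A)) '' J) := by
    ext x
    simp [MIdeal, Set.mem_iInter]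
  rw [heq]
  exact isClosed_iInter fun a => (iota_image_isClosed hJ.1).preimage (continuous_mul_right _)

lemma MIdeal_mul_left {J : Set A} (hJ : IsIdealSet J) (p : 𝓜(ℂ, A)) {m : 𝓜(ℂ, A)}
    (hm : m ∈ MIdeal J) : p * m ∈ MIdeal J := by
  intro a
  obtain ⟨j, hj, hje⟩ := hm a
  rw [mul_assoc, ← hje, mul_iota]
  refine ⟨p.fst j, key_mem hJ fun z => ?_, rfl⟩
  have h1 : iota (z * p.fst j) = iota (p.snd z * j) := by
    rw [map_mul, map_mul, ← mul_iota, ← iota_mul, mul_assoc]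
  rw [iota_injective h1]
  exact ((hJ.2.2.2.2 (p.snd z) j hj).1)

lemma MIdeal_mul_right {J : Set A} (p : 𝓜(ℂ, A)) {m : 𝓜(ℂ, A)}
    (hm : m ∈ MIdeal J) : m * p ∈ MIdeal J := by
  intro a
  rw [mul_assoc, mul_iota p a]
  exact hm (p.fst a)

lemma isIdealSet_preimage (φ : A →⋆ₙₐ[ℂ] 𝓜(ℂ, A)) {J : Set A} (hJ : IsIdealSet J) :
    IsIdealSet {a : A | φ a ∈ MIdeal J} := by
  have hcont : Continuous φ :=
    AddMonoidHomClass.continuous_of_bound φ 1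
      (fun a => by simpa using NonUnitalStarAlgHom.norm_apply_le φ a)
  refine ⟨(MIdeal_isClosed hJ).preimage hcont, ?_, ?_, ?_, ?_⟩
  · show φ 0 ∈ MIdeal J
    rw [map_zero]
    intro a
    rw [zero_mul]
    exact ⟨0, hJ.2.1, map_zero _⟩
  · intro x hx y hy
    show φ (x + y) ∈ MIdeal J
    rw [map_add]
    intro a
    obtain ⟨j₁, hj₁, hje₁⟩ := hx a
    obtain ⟨j₂, hj₂, hje₂⟩ := hy a
    rw [add_mul, ← hje₁, ← hje₂, ← map_add]
    exact ⟨j₁ + j₂, hJ.2.2.1 j₁ hj₁ j₂ hj₂, rfl⟩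
  · intro c x hx
    show φ (c • x) ∈ MIdeal J
    rw [map_smul]
    intro a
    obtain ⟨j, hj, hje⟩ := hx a
    rw [smul_mul_assoc, ← hje, ← map_smul]
    exact ⟨c • j, hJ.2.2.2.1 c j hj, rfl⟩
  · intro a j hj
    constructor
    · show φ (a * j) ∈ MIdeal J
      rw [map_mul]
      exact MIdeal_mul_left hJ _ hj
    · show φ (j * a) ∈ MIdeal J
      rw [map_mul]
      exact MIdeal_mul_right _ hj

/-- The image of an ideal under `iota`, as a submodule. -/
def iotaSubmodule {J : Set A} (hJ : IsIdealSet J) : Submodule ℂ 𝓜(ℂ, A) where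
  carrier := ⇑(iota (A := A)) '' J
  zero_mem' := ⟨0, hJ.2.1, map_zero _⟩
  add_mem' := by
    rintro x y ⟨j₁, hj₁, rfl⟩ ⟨j₂, hj₂, rfl⟩
    exact ⟨j₁ + j₂, hJ.2.2.1 j₁ hj₁ j₂ hj₂, map_add _ _ _⟩
  smul_mem' := by
    rintro c x ⟨j, hj, rfl⟩
    exact ⟨c • j, hJ.2.2.2.1 c j hj, map_smul _ _ _⟩

lemma genSpan_subset (φ : A →⋆ₙₐ[ℂ] 𝓜(ℂ, A)) {J K : Set A} (hJ : IsIdealSet J)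
    (hK : ∀ x ∈ K, φ x ∈ MIdeal J) : genSpan φ K ⊆ ⇑(iota (A := A)) '' J := by
  have h1 : Submodule.span ℂ {z : 𝓜(ℂ, A) | ∃ a b : A, ∃ x ∈ K, z = iota a * φ x * iota b}
      ≤ iotaSubmodule hJ := by
    rw [Submodule.span_le]
    rintro z ⟨a, b, x, hx, rfl⟩
    obtain ⟨j, hj, hje⟩ := hK x hx b
    show iota a * φ x * iota b ∈ ⇑(iota (A := A)) '' J
    rw [mul_assoc, ← hje, ← map_mul]
    exact ⟨a * j, (hJ.2.2.2.2 a j hj).1, rfl⟩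
  exact closure_minimal h1 (iota_image_isClosed hJ.1)

lemma main_subset (φ₁ φ₂ : A →⋆ₙₐ[ℂ] 𝓜(ℂ, A))
    (h : ∀ J : Set A, IsIdealSet J → genSpan φ₁ J = genSpan φ₂ J) {J : Set A}
    (hJ : IsIdealSet J) : {a : A | φ₁ a ∈ MIdeal J} ⊆ {a : A | φ₂ a ∈ MIdeal J} := by
  set K := {a : A | φ₁ a ∈ MIdeal J} with hK_def
  have hK : IsIdealSet K := isIdealSet_preimage φ₁ hJ
  have h2 : genSpan φ₂ K ⊆ ⇑(iota (A := A)) '' J := by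
    rw [← h K hK]
    exact genSpan_subset φ₁ hJ fun x hx => hx
  intro x hx
  show φ₂ x ∈ MIdeal J
  intro b
  rw [mul_iota]
  refine ⟨(φ₂ x).fst b, key_mem hJ fun a => ?_, rfl⟩
  have hmem : iota a * φ₂ x * iota b ∈ genSpan φ₂ K :=
    subset_closure (Submodule.subset_span ⟨a, b, x, hx, rfl⟩)
  obtain ⟨j, hj, hje⟩ := h2 hmem
  have h3 : iota (a * (φ₂ x).fst b) = iota j := by
    rw [map_mul, ← mul_iota, ← mul_assoc, hje]
  rw [iota_injective h3]
  exact hj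

/-- if for every closed two-sided ideal `J` of `A` the closed linear spans of
`{ι(a)φ₁(x)ι(b)}` and `{ι(a)φ₂(x)ι(b)}` (with `x ∈ J`) coincide, then
`φ₁⁻¹(φ₁(A) ∩ 𝓜(A, J)) = φ₂⁻¹(φ₂(A) ∩ 𝓜(A, J))` for every such `J`. -/
theorem stmt_17 (φ₁ φ₂ : A →⋆ₙₐ[ℂ] 𝓜(ℂ, A))
    (h : ∀ J : Set A, IsIdealSet J → genSpan φ₁ J = genSpan φ₂ J) :
    ∀ J : Set A, IsIdealSet J →
      {a : A | φ₁ a ∈ MIdeal J} = {a : A | φ₂ a ∈ MIdeal J} := fun J hJ =>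
  subset_antisymm (main_subset φ₁ φ₂ h hJ)
    (main_subset φ₂ φ₁ (fun J hJ => (h J hJ).symm) hJ)

end
end

section
/- Let G be a second-countable, locally compact Hausdorff group, B a complex C*-algebra, and A = C₀(G, B). Let φ₁, φ₂ : A → 𝓜(A) be *-homomorphisms such that for every closed two-sided ideal J of A, {a ∈ A : φ₁(a) ∈ 𝓜(A, J)} = {a ∈ A : φ₂(a) ∈ 𝓜(A, J)}. For i ∈ {1, 2} and a closed two-sided ideal J of A, consider the conditions: (i) φᵢ(x) ∈ 𝓜(A, J) for every x ∈ J; (ii) there exists a closed two-sided ideal I of B such that J = {f ∈ A : f(g) ∈ I for all g ∈ G}; (iii) φᵢ(J) = φᵢ(A) ∩ 𝓜(A, J) as subsets of 𝓜(A). If for every closed two-sided ideal J of A the three conditions (i), (ii), (iii) are mutually equivalent for i = 1, then they are also mutually equivalent for i = 2. -/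
open scoped MultiplierAlgebra ZeroAtInfty

noncomputable section

variable {A : Type*} [NonUnitalCStarAlgebra A]

/-- If `x · ι(a) = 0` for all `a`, then `x = 0` (essentiality of the ideal `A` in `𝓜(A)`). -/
lemma eq_zero_of_mul_iota_eq_zero (x : 𝓜(ℂ, A)) (h : ∀ a : A, x * iota a = 0) : x = 0 := by
  have hsnd : ∀ b : A, x.snd b = 0 := by
    intro b
    have h2 : x.snd b * star (x.snd b) = 0 := by
      have := congrArg (fun y : 𝓜(ℂ, A) => y.snd) (h (star (x.snd b)))
      simp only [DoubleCentralizer.mul_snd, DoubleCentralizer.zero_snd] at this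
      have h3 := congrArg (fun f : A →L[ℂ] A => f b) this
      simpa [iota, DoubleCentralizer.coe_snd, ContinuousLinearMap.mul_apply'] using h3
    have : ‖x.snd b‖ * ‖x.snd b‖ = 0 := by
      rw [← CStarRing.norm_self_mul_star, h2, norm_zero]
    have := mul_self_eq_zero.mp this
    simpa using this
  have : ‖x‖ = 0 := by
    rw [← DoubleCentralizer.norm_snd]
    have : x.snd = 0 := ContinuousLinearMap.ext hsnd
    rw [this, norm_zero]
  exact norm_eq_zero.mp this

lemma zero_isIdealSet : IsIdealSet ({0} : Set A) := by
  refine ⟨isClosed_singleton, rfl, ?_, ?_, ?_⟩ <;> simp +contextual [Set.mem_singleton_iff]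

lemma mem_MIdeal_zero_iff (x : 𝓜(ℂ, A)) : x ∈ MIdeal ({0} : Set A) ↔ x = 0 := by
  constructor
  · intro hx
    refine eq_zero_of_mul_iota_eq_zero x fun a => ?_
    obtain ⟨j, hj, hje⟩ := hx a
    rw [Set.mem_singleton_iff] at hj
    rw [← hje, hj, map_zero]
  · rintro rfl a
    exact ⟨0, rfl, by simp⟩

/-- transferring the equivalence of conditions (i), (ii), (iii) from `φ₁`
to `φ₂`, for `A = C₀(G, B)`. -/
theorem stmt_18 {G : Type*} [TopologicalSpace G] [Group G] [IsTopologicalGroup G]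
    [LocallyCompactSpace G] [T2Space G] [SecondCountableTopology G]
    {B : Type*} [NonUnitalCStarAlgebra B]
    (φ₁ φ₂ : C₀(G, B) →⋆ₙₐ[ℂ] 𝓜(ℂ, C₀(G, B)))
    (hpre : ∀ J : Set C₀(G, B), IsIdealSet J →
      {a : C₀(G, B) | φ₁ a ∈ MIdeal J} = {a : C₀(G, B) | φ₂ a ∈ MIdeal J})
    (h1 : ∀ J : Set C₀(G, B), IsIdealSet J →
      ((∀ x ∈ J, φ₁ x ∈ MIdeal J) ↔
        ∃ I : Set B, IsIdealSet I ∧ J = {f : C₀(G, B) | ∀ g : G, f g ∈ I}) ∧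
      ((∃ I : Set B, IsIdealSet I ∧ J = {f : C₀(G, B) | ∀ g : G, f g ∈ I}) ↔
        ⇑φ₁ '' J = Set.range ⇑φ₁ ∩ MIdeal J)) :
    ∀ J : Set C₀(G, B), IsIdealSet J →
      ((∀ x ∈ J, φ₂ x ∈ MIdeal J) ↔
        ∃ I : Set B, IsIdealSet I ∧ J = {f : C₀(G, B) | ∀ g : G, f g ∈ I}) ∧
      ((∃ I : Set B, IsIdealSet I ∧ J = {f : C₀(G, B) | ∀ g : G, f g ∈ I}) ↔
        ⇑φ₂ '' J = Set.range ⇑φ₂ ∩ MIdeal J) := by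
  -- φ₁ and φ₂ have the same kernel, by `hpre` applied to the zero ideal.
  have hker : ∀ a : C₀(G, B), φ₁ a = 0 ↔ φ₂ a = 0 := by
    intro a
    have := hpre ({0} : Set C₀(G, B)) zero_isIdealSet
    constructor
    · intro h
      have ha : a ∈ {a : C₀(G, B) | φ₁ a ∈ MIdeal ({0} : Set C₀(G, B))} := by
        simp only [Set.mem_setOf_eq, mem_MIdeal_zero_iff]; exact h
      rw [this] at ha
      exact (mem_MIdeal_zero_iff _).mp ha
    · intro h
      have ha : a ∈ {a : C₀(G, B) | φ₂ a ∈ MIdeal ({0} : Set C₀(G, B))} := by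
        simp only [Set.mem_setOf_eq, mem_MIdeal_zero_iff]; exact h
      rw [← this] at ha
      exact (mem_MIdeal_zero_iff _).mp ha
  have hker' : ∀ a j : C₀(G, B), φ₁ a = φ₁ j ↔ φ₂ a = φ₂ j := by
    intro a j
    constructor
    · intro h
      have : φ₂ (a - j) = 0 := (hker _).mp (by rw [map_sub, h, sub_self])
      rw [map_sub, sub_eq_zero] at this
      exact this
    · intro h
      have : φ₁ (a - j) = 0 := (hker _).mpr (by rw [map_sub, h, sub_self])
      rw [map_sub, sub_eq_zero] at this
      exact this
  intro J hJ
  have hp := hpre J hJ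
  -- condition (i) is equivalent for φ₁ and φ₂
  have hi : (∀ x ∈ J, φ₂ x ∈ MIdeal J) ↔ (∀ x ∈ J, φ₁ x ∈ MIdeal J) := by
    constructor
    · intro h x hx
      have : x ∈ {a : C₀(G, B) | φ₂ a ∈ MIdeal J} := h x hx
      rw [← hp] at this; exact this
    · intro h x hx
      have : x ∈ {a : C₀(G, B) | φ₁ a ∈ MIdeal J} := h x hx
      rw [hp] at this; exact this
  refine ⟨hi.trans (h1 J hJ).1, ?_⟩
  constructor
  · -- (ii) → (iii) for φ₂
    intro hii
    have hiii₁ : ⇑φ₁ '' J = Set.range ⇑φ₁ ∩ MIdeal J := (h1 J hJ).2.mp hii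
    have hi₂ : ∀ x ∈ J, φ₂ x ∈ MIdeal J := hi.mpr ((h1 J hJ).1.mpr hii)
    apply Set.eq_of_subset_of_subset
    · rintro _ ⟨j, hj, rfl⟩
      exact ⟨⟨j, rfl⟩, hi₂ j hj⟩
    · rintro _ ⟨⟨a, rfl⟩, hma⟩
      have ha1 : φ₁ a ∈ MIdeal J := by
        have : a ∈ {a : C₀(G, B) | φ₂ a ∈ MIdeal J} := hma
        rw [← hp] at this; exact this
      have : φ₁ a ∈ ⇑φ₁ '' J := by rw [hiii₁]; exact ⟨⟨a, rfl⟩, ha1⟩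
      obtain ⟨j, hj, hje⟩ := this
      exact ⟨j, hj, ((hker' a j).mp hje.symm).symm⟩
  · -- (iii) for φ₂ → (ii)
    intro hiii₂
    apply (h1 J hJ).2.mpr
    apply Set.eq_of_subset_of_subset
    · rintro _ ⟨j, hj, rfl⟩
      refine ⟨⟨j, rfl⟩, ?_⟩
      have : φ₂ j ∈ Set.range ⇑φ₂ ∩ MIdeal J := by rw [← hiii₂]; exact ⟨j, hj, rfl⟩
      have hj2 : j ∈ {a : C₀(G, B) | φ₂ a ∈ MIdeal J} := this.2
      rw [← hp] at hj2; exact hj2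
    · rintro _ ⟨⟨a, rfl⟩, hma⟩
      have ha2 : φ₂ a ∈ MIdeal J := by
        have : a ∈ {a : C₀(G, B) | φ₁ a ∈ MIdeal J} := hma
        rw [hp] at this; exact this
      have : φ₂ a ∈ ⇑φ₂ '' J := by rw [hiii₂]; exact ⟨⟨a, rfl⟩, ha2⟩
      obtain ⟨j, hj, hje⟩ := this
      exact ⟨j, hj, ((hker' a j).mpr hje.symm).symm⟩

end
end
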